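/- arXiv:2509.00363 — 10 statements merged into one kernel-verified Lean document; each statement's English description precedes it below -/
import Mathlib

section
/- For every natural number n, the ring ℤ/⟨2^n⟩ is n-Noetherian. -/
open Ordinal

/-- A list is good ((-1)-good) if it is nonempty and its last entry lies in the
submodule generated by the preceding entries. -/
def GoodList (A : Type*) {M : Type*} [Ring A] [AddCommGroup M] [Module A M]
    (σ : List M) : Prop :=
  ∃ (l : List M) (x : M), σ = l ++ [x] ∧ x ∈ Submodule.span A {y | y ∈ l}

/-- A list `σ` is `α`-good if for every `x`, the appended list `σ.x` is either good
((-1)-good) or `β`-good for some ordinal `β < α`.  A module `M` is `α`-Noetherian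
if the empty list `[] : List M` is `α`-good; a ring is `α`-Noetherian if it is
`α`-Noetherian as a left module over itself. -/
def AlphaGood (A : Type*) {M : Type*} [Ring A] [AddCommGroup M] [Module A M]
    (α : Ordinal) (σ : List M) : Prop :=
  ∀ x : M, GoodList A (σ ++ [x]) ∨ ∃ (β : Ordinal) (_ : β < α), AlphaGood A β (σ ++ [x])
termination_by α
-- doubling lemma
lemma double_card {A M : Type*} [Ring A] [AddCommGroup M] [Module A M] [Finite M]
    {p q : Submodule A M} (hle : p ≤ q) (hne : p ≠ q) :
    2 * Nat.card p ≤ Nat.card q := by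
  have hdvd : Nat.card p ∣ Nat.card q :=
    AddSubgroup.card_dvd_of_le (H := p.toAddSubgroup) (K := q.toAddSubgroup) hle
  have hlt : Nat.card p < Nat.card q := by
    have e1 : Nat.card p = (p : Set M).ncard := Nat.card_coe_set_eq _
    have e2 : Nat.card q = (q : Set M).ncard := Nat.card_coe_set_eq _
    rw [e1, e2]
    exact Set.ncard_lt_ncard (HasSubset.Subset.ssubset_of_ne hle
      (fun h => hne (SetLike.coe_injective h))) (Set.toFinite _)
  obtain ⟨c, hc⟩ := hdvd
  have hp : 0 < Nat.card p := Nat.card_pos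
  have : 2 ≤ c := by
    rcases Nat.lt_or_ge c 2 with h | h
    · interval_cases c <;> omega
    · exact h
  calc 2 * Nat.card p ≤ Nat.card p * c := by nlinarith
  _ = Nat.card q := hc.symm

lemma main_lemma (n : ℕ) : ∀ (k : ℕ) (σ : List (ZMod (2^n))),
    2 ^ n ≤ 2 ^ k * Nat.card (Submodule.span (ZMod (2^n)) {y | y ∈ σ}) →
    AlphaGood (ZMod (2^n)) (k : Ordinal) σ := by
  haveI : NeZero (2 ^ n) := ⟨pow_ne_zero n two_ne_zero⟩
  intro k
  induction k with
  | zero =>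
    intro σ hσ
    rw [AlphaGood]
    intro x
    left
    refine ⟨σ, x, rfl, ?_⟩
    by_contra hx
    have hle : Submodule.span (ZMod (2^n)) {y | y ∈ σ} ≤
        Submodule.span (ZMod (2^n)) {y | y ∈ σ ++ [x]} :=
      Submodule.span_mono (fun y hy => by simp_all)
    have hne : Submodule.span (ZMod (2^n)) {y | y ∈ σ} ≠
        Submodule.span (ZMod (2^n)) {y | y ∈ σ ++ [x]} := by
      intro h
      apply hx
      rw [h]
      exact Submodule.subset_span (by simp)
    have hd := double_card hle hne
    have hcard : Nat.card (Submodule.span (ZMod (2^n)) {y | y ∈ σ ++ [x]}) ≤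
        Nat.card (ZMod (2^n)) :=
      Nat.card_le_card_of_injective _ Subtype.val_injective
    rw [Nat.card_zmod] at hcard
    simp only [pow_zero, one_mul] at hσ
    have hpos : 0 < 2 ^ n := by positivity
    omega
  | succ j ih =>
    intro σ hσ
    rw [AlphaGood]
    intro x
    by_cases hx : x ∈ Submodule.span (ZMod (2^n)) {y | y ∈ σ}
    · exact Or.inl ⟨σ, x, rfl, hx⟩
    · right
      refine ⟨(j : Ordinal), by exact_mod_cast Nat.lt_succ_self j, ?_⟩
      apply ih
      have hle : Submodule.span (ZMod (2^n)) {y | y ∈ σ} ≤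
          Submodule.span (ZMod (2^n)) {y | y ∈ σ ++ [x]} :=
        Submodule.span_mono (fun y hy => by simp_all)
      have hne : Submodule.span (ZMod (2^n)) {y | y ∈ σ} ≠
          Submodule.span (ZMod (2^n)) {y | y ∈ σ ++ [x]} := by
        intro h
        apply hx
        rw [h]
        exact Submodule.subset_span (by simp)
      have hd := double_card hle hne
      calc 2 ^ n ≤ 2 ^ (j+1) * Nat.card (Submodule.span (ZMod (2^n)) {y | y ∈ σ}) := hσ
      _ = 2 ^ j * (2 * Nat.card (Submodule.span (ZMod (2^n)) {y | y ∈ σ})) := by ring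
      _ ≤ 2 ^ j * Nat.card (Submodule.span (ZMod (2^n)) {y | y ∈ σ ++ [x]}) :=
          Nat.mul_le_mul_left _ hd

/-- For every natural number `n`, the ring `ℤ/⟨2^n⟩` is `n`-Noetherian. -/
theorem zmod_two_pow_noetherian (n : ℕ) :
    AlphaGood (ZMod (2 ^ n)) (n : Ordinal) ([] : List (ZMod (2 ^ n))) := by
  haveI : NeZero (2 ^ n) := ⟨pow_ne_zero n two_ne_zero⟩
  apply main_lemma n n
  have : 0 < Nat.card (Submodule.span (ZMod (2^n)) {y | y ∈ ([] : List (ZMod (2^n)))}) :=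
    Nat.card_pos
  nlinarith [Nat.one_le_two_pow (n := n)]
end

section
/- For every natural number n and discrete field K, the ring K[X]/⟨X^n⟩ is n-Noetherian. -/
open Ordinal

section Aux

open Polynomial

variable {K : Type*} [Field K] [DecidableEq K] (n : ℕ)

local notation "R" => Polynomial K ⧸ Ideal.span {(Polynomial.X : Polynomial K) ^ n}

set_option synthInstance.maxHeartbeats 1000000 in
/-- Every nonzero element of `K[X]/⟨X^n⟩` generates the same ideal as `X^k` for some `k < n`. -/
lemma exists_span_eq (x : R) (hx : x ≠ 0) :
    ∃ k < n, Ideal.span {x} =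
      Ideal.span {(Ideal.Quotient.mk _ (X ^ k : Polynomial K) : R)} := by
  obtain ⟨p, rfl⟩ := Ideal.Quotient.mk_surjective x
  have hp : p ≠ 0 := by rintro rfl; simp at hx
  obtain ⟨q, hq, hqd⟩ := p.exists_eq_pow_rootMultiplicity_mul_and_not_dvd hp 0
  rw [map_zero, _root_.sub_zero] at hq hqd
  set k := p.rootMultiplicity 0 with hk
  refine ⟨k, ?_, ?_⟩
  · by_contra h
    push_neg at h
    apply hx
    rw [Ideal.Quotient.eq_zero_iff_mem, Ideal.mem_span_singleton]
    exact dvd_trans (pow_dvd_pow X h) (hq ▸ Dvd.intro q rfl)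
  · have hu : IsUnit (Ideal.Quotient.mk _ q : R) := by
      have hco : IsCoprime q ((X : Polynomial K) ^ n) :=
        Irreducible.coprime_pow_of_not_dvd n Polynomial.irreducible_X hqd
      obtain ⟨a, b, hab⟩ := hco
      refine IsUnit.of_mul_eq_one (Ideal.Quotient.mk _ a) ?_
      have h0 : (Ideal.Quotient.mk (Ideal.span {(X : Polynomial K) ^ n}) (X ^ n)) = 0 := by
        rw [Ideal.Quotient.eq_zero_iff_mem]
        exact Ideal.subset_span rfl
      calc (Ideal.Quotient.mk _ q : R) * Ideal.Quotient.mk _ a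
          = Ideal.Quotient.mk _ (a * q + b * X ^ n) := by
            rw [map_add, map_mul, map_mul, h0, mul_zero, add_zero, mul_comm]
        _ = 1 := by rw [hab, map_one]
    have heq : (Ideal.Quotient.mk _ p : R)
        = (Ideal.Quotient.mk _ (X ^ k : Polynomial K) : R) * Ideal.Quotient.mk _ q := by
      rw [← map_mul, ← hq]
    apply le_antisymm <;> rw [Ideal.span_singleton_le_span_singleton]
    · exact ⟨Ideal.Quotient.mk _ q, heq⟩
    · obtain ⟨u, hu'⟩ := hu
      exact ⟨(↑u⁻¹ : R), by rw [heq, ← hu', mul_assoc, Units.mul_inv, mul_one]⟩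

set_option synthInstance.maxHeartbeats 1000000 in
/-- If the span of a list `σ` in `K[X]/⟨X^n⟩` contains the ideal generated by `X^k`, then
`σ` is `k`-good. -/
lemma key (k : ℕ) : ∀ σ : List R,
    Ideal.span {(Ideal.Quotient.mk _ (X ^ k : Polynomial K) : R)} ≤
      Submodule.span R {y | y ∈ σ} → AlphaGood R (k : Ordinal) σ := by
  induction k using Nat.strong_induction_on with
  | _ k ih =>
    intro σ hσ
    rw [AlphaGood]
    intro x
    by_cases hx : x ∈ Submodule.span R {y | y ∈ σ}
    · exact Or.inl ⟨σ, x, rfl, hx⟩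
    · have hx0 : x ≠ 0 := by rintro rfl; exact hx (Submodule.zero_mem _)
      obtain ⟨j, hjn, hj⟩ := exists_span_eq n x hx0
      have hjk : j < k := by
        by_contra h
        push_neg at h
        apply hx
        apply hσ
        have h1 : x ∈ Ideal.span {(Ideal.Quotient.mk _ (X ^ j : Polynomial K) : R)} := by
          rw [← hj]; exact Ideal.mem_span_singleton_self x
        have h2 : Ideal.span {(Ideal.Quotient.mk _ (X ^ j : Polynomial K) : R)} ≤
            Ideal.span {(Ideal.Quotient.mk _ (X ^ k : Polynomial K) : R)} := by
          rw [Ideal.span_singleton_le_span_singleton]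
          exact map_dvd (Ideal.Quotient.mk _) (pow_dvd_pow X h)
        exact h2 h1
      refine Or.inr ⟨(j : Ordinal), ?_, ?_⟩
      · exact_mod_cast Nat.cast_lt.mpr hjk
      · apply ih j hjk
        rw [← hj]
        intro y hy
        rw [Ideal.mem_span_singleton] at hy
        obtain ⟨c, rfl⟩ := hy
        rw [mul_comm, ← _root_.smul_eq_mul]
        exact Submodule.smul_mem _ c (Submodule.subset_span
          (List.mem_append.mpr (Or.inr (List.mem_singleton_self x))))

end Aux

set_option synthInstance.maxHeartbeats 1000000 in
/-- For every natural number `n` and discrete field `K`, the ring `K[X]/⟨X^n⟩` is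
`n`-Noetherian. -/
theorem quotient_X_pow_noetherian (n : ℕ) (K : Type*) [Field K] [DecidableEq K] :
    AlphaGood (Polynomial K ⧸ Ideal.span {(Polynomial.X : Polynomial K) ^ n}) (n : Ordinal)
      ([] : List (Polynomial K ⧸ Ideal.span {(Polynomial.X : Polynomial K) ^ n})) := by
  apply key n n
  intro y hy
  rw [Ideal.mem_span_singleton] at hy
  obtain ⟨c, rfl⟩ := hy
  have h0 : (Ideal.Quotient.mk
      (Ideal.span {(Polynomial.X : Polynomial K) ^ n}) (Polynomial.X ^ n)) = 0 := by
    rw [Ideal.Quotient.eq_zero_iff_mem]; exact Ideal.subset_span rfl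
  rw [h0, zero_mul]
  exact Submodule.zero_mem _
end

section
/- The ring of integers ℤ is ω-Noetherian. -/
open Ordinal

lemma int_aux : ∀ n : ℕ, ∀ σ : List ℤ,
    (∃ d : ℤ, 0 < d ∧ d ≤ (n : ℤ) ∧ d ∈ Submodule.span ℤ {y | y ∈ σ}) →
    AlphaGood ℤ (n : Ordinal) σ := by
  intro n
  induction n using Nat.strong_induction_on with
  | _ n ih =>
    rintro σ ⟨d, hd0, hdn, hdI⟩
    rw [AlphaGood]
    intro x
    by_cases hx : x ∈ Submodule.span ℤ {y | y ∈ σ}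
    · exact Or.inl ⟨σ, x, rfl, hx⟩
    · right
      set I := Submodule.span ℤ {y | y ∈ σ} with hI
      obtain ⟨g, hg⟩ := (inferInstance : Submodule.IsPrincipal I).principal
      have hdg : g ∣ d := by
        rw [hg, Submodule.mem_span_singleton] at hdI
        obtain ⟨a, ha⟩ := hdI
        exact ⟨a, by rw [← ha, _root_.smul_eq_mul, mul_comm]⟩
      have hgx : ¬ g ∣ x := by
        rintro ⟨a, ha⟩
        exact hx (by rw [hg, Submodule.mem_span_singleton]; exact ⟨a, by rw [ha, _root_.smul_eq_mul, mul_comm]⟩)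
      have hgne : g ≠ 0 := by rintro rfl; simp at hdg; omega
      set m := Int.gcd g x with hm
      have hm0 : 0 < m := Int.gcd_pos_of_ne_zero_left x hgne
      have hmlt : m < n := by
        have h1 : m < g.natAbs := by
          have h2 : m ≤ g.natAbs :=
            Nat.le_of_dvd (Int.natAbs_pos.mpr hgne) (Nat.gcd_dvd_left _ _)
          rcases lt_or_eq_of_le h2 with h | h
          · exact h
          · exfalso
            apply hgx
            have hdx : (g.natAbs : ℤ) ∣ x := by rw [← h]; exact Int.gcd_dvd_right _ _
            exact Int.natAbs_dvd.mp hdx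
        have h3 : g.natAbs ≤ d.natAbs :=
          Nat.le_of_dvd (Int.natAbs_pos.mpr (by omega)) (Int.natAbs_dvd_natAbs.mpr hdg)
        omega
      refine ⟨(m : Ordinal), Nat.cast_lt.mpr hmlt, ?_⟩
      apply ih m hmlt
      set S := Submodule.span ℤ {y | y ∈ σ ++ [x]} with hS
      have hsub : I ≤ S := by
        apply Submodule.span_mono
        intro y hy
        simp only [Set.mem_setOf_eq, List.mem_append] at *
        exact Or.inl hy
      have hgS : g ∈ S := hsub (by rw [hg]; exact Submodule.mem_span_singleton_self g)
      have hxS : x ∈ S := Submodule.subset_span (by simp)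
      have h1 : g * Int.gcdA g x ∈ S := by
        simpa [_root_.smul_eq_mul, mul_comm] using S.smul_mem (Int.gcdA g x) hgS
      have h2 : x * Int.gcdB g x ∈ S := by
        simpa [_root_.smul_eq_mul, mul_comm] using S.smul_mem (Int.gcdB g x) hxS
      refine ⟨(m : ℤ), by exact_mod_cast hm0, le_refl _, ?_⟩
      rw [hm, Int.gcd_eq_gcd_ab]
      exact S.add_mem h1 h2

/-- The ring of integers `ℤ` is `ω`-Noetherian. -/
theorem int_omega_noetherian :
    AlphaGood ℤ Ordinal.omega0 ([] : List ℤ) := by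
  rw [AlphaGood]
  intro x
  by_cases hx : x = 0
  · exact Or.inl ⟨[], x, rfl, by rw [hx]; exact Submodule.zero_mem _⟩
  · refine Or.inr ⟨(x.natAbs : Ordinal), nat_lt_omega0 _, ?_⟩
    apply int_aux
    refine ⟨(x.natAbs : ℤ), by exact_mod_cast Int.natAbs_pos.mpr hx, le_refl _, ?_⟩
    have hxS : x ∈ Submodule.span ℤ {y | y ∈ ([] : List ℤ) ++ [x]} :=
      Submodule.subset_span (by simp)
    rcases Int.natAbs_eq x with h | h
    · rw [← h]; exact hxS
    · have : (x.natAbs : ℤ) = -x := by omega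
      rw [this]; exact Submodule.neg_mem _ hxS
end

section
/- For a discrete field K, the polynomial ring K[X] is ω-Noetherian. -/
open Ordinal

lemma key_lemma (K : Type*) [Field K] [DecidableEq K] :
    ∀ (n : ℕ) (σ : List (Polynomial K)),
      (∃ p : Polynomial K, p ∈ Submodule.span (Polynomial K) {y | y ∈ σ} ∧ p ≠ 0 ∧
        p.natDegree ≤ n) →
      AlphaGood (Polynomial K) (n : Ordinal) σ := by
  intro n
  induction n with
  | zero =>
    rintro σ ⟨p, hp, hp0, hdeg⟩
    rw [AlphaGood]
    intro x
    left
    refine ⟨σ, x, rfl, ?_⟩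
    -- p is a nonzero constant, hence a unit
    have hpc : p = Polynomial.C (p.coeff 0) :=
      Polynomial.eq_C_of_natDegree_eq_zero (Nat.le_zero.mp hdeg)
    have hc0 : p.coeff 0 ≠ 0 := by
      intro h; apply hp0; rw [hpc, h, map_zero]
    have hb : p * Polynomial.C (p.coeff 0)⁻¹ = 1 := by
      nth_rewrite 1 [hpc]
      rw [← map_mul, mul_inv_cancel₀ hc0, map_one]
    have : x = (x * Polynomial.C (p.coeff 0)⁻¹) * p := by
      rw [mul_assoc, mul_comm _ p, hb, mul_one]
    rw [this]
    exact Ideal.mul_mem_left _ _ hp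
  | succ m ih =>
    rintro σ ⟨p, hp, hp0, hdeg⟩
    rw [AlphaGood]
    intro x
    by_cases hx : x ∈ Submodule.span (Polynomial K) {y | y ∈ σ}
    · left; exact ⟨σ, x, rfl, hx⟩
    · right
      set q := EuclideanDomain.gcd p x with hq
      have hq0 : q ≠ 0 := by
        intro h
        exact hp0 (EuclideanDomain.gcd_eq_zero_iff.mp h).1
      have hqp : q ∣ p := EuclideanDomain.gcd_dvd_left p x
      have hqx : q ∣ x := EuclideanDomain.gcd_dvd_right p x
      have hlt : q.natDegree < p.natDegree := by
        rcases lt_or_ge q.natDegree p.natDegree with h | h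
        · exact h
        exfalso
        obtain ⟨c, hc⟩ := hqp
        have hc0 : c ≠ 0 := by
          rintro rfl; rw [mul_zero] at hc; exact hp0 hc
        have hpd : p.natDegree = q.natDegree + c.natDegree := by
          rw [hc]; exact Polynomial.natDegree_mul hq0 hc0
        have hdc : c.natDegree = 0 := by omega
        -- c is a nonzero constant, hence p divides x, contradicting hx
        have hcc : c = Polynomial.C (c.coeff 0) :=
          Polynomial.eq_C_of_natDegree_eq_zero hdc
        have hcc0 : c.coeff 0 ≠ 0 := by
          intro h; apply hc0; rw [hcc, h, map_zero]
        have hcb : c * Polynomial.C (c.coeff 0)⁻¹ = 1 := by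
          nth_rewrite 1 [hcc]
          rw [← map_mul, mul_inv_cancel₀ hcc0, map_one]
        obtain ⟨d, hd⟩ := hqx
        apply hx
        have hxe : x = (Polynomial.C (c.coeff 0)⁻¹ * d) * p := by
          rw [hd, hc]
          calc q * d = q * (c * Polynomial.C (c.coeff 0)⁻¹) * d := by rw [hcb, mul_one]
          _ = Polynomial.C (c.coeff 0)⁻¹ * d * (q * c) := by ring
        rw [hxe]
        exact Ideal.mul_mem_left _ _ hp
      have hps : p ∈ Submodule.span (Polynomial K) {y | y ∈ σ ++ [x]} :=
        Submodule.span_mono (fun y hy => by simp only [Set.mem_setOf_eq, List.mem_append] at hy ⊢; exact Or.inl hy) hp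
      have hxs : x ∈ Submodule.span (Polynomial K) {y | y ∈ σ ++ [x]} :=
        Submodule.subset_span (by simp)
      have hmem : q ∈ Submodule.span (Polynomial K) {y | y ∈ σ ++ [x]} := by
        rw [hq, EuclideanDomain.gcd_eq_gcd_ab]
        exact Submodule.add_mem _
          (by rw [mul_comm]; exact Ideal.mul_mem_left _ _ hps)
          (by rw [mul_comm]; exact Ideal.mul_mem_left _ _ hxs)
      refine ⟨(m : Ordinal), by exact_mod_cast Nat.lt_succ_self m, ?_⟩
      exact ih (σ ++ [x]) ⟨q, hmem, hq0, by omega⟩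

/-- For a discrete field `K`, the polynomial ring `K[X]` is `ω`-Noetherian. -/
theorem polynomial_omega_noetherian (K : Type*) [Field K] [DecidableEq K] :
    AlphaGood (Polynomial K) Ordinal.omega0 ([] : List (Polynomial K)) := by
  rw [AlphaGood]
  intro x
  by_cases hx : x = 0
  · left
    exact ⟨[], x, rfl, by simp [hx]⟩
  · right
    refine ⟨(x.natDegree : Ordinal), Ordinal.nat_lt_omega0 _, ?_⟩
    exact key_lemma K x.natDegree [x] ⟨x, Submodule.subset_span (by simp), hx, le_rfl⟩
end

section
/- Let M be a module over a ring A, α an ordinal, and σ a finite list of elements of M. If the submodule generated by σ contains an α-Euclidean element, then σ is α-good. -/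
open Ordinal

/-- `x : M` is `α`-Euclidean if for every `y : M` there is a `z` which is either
`(-1)`-Euclidean (i.e. `z = 0`) or `β`-Euclidean for some ordinal `β < α`, with
`z - y ∈ ⟨x⟩`.  A module is `α`-Euclidean if every element is `(-1)`-Euclidean
(i.e. zero) or `β`-Euclidean for some `β < α`; a ring is `α`-Euclidean if it is
so as a left module over itself. -/
def AlphaEuclidean (A : Type*) {M : Type*} [Ring A] [AddCommGroup M] [Module A M]
    (α : Ordinal) (x : M) : Prop :=
  ∀ y : M, (∃ z : M, z = 0 ∧ z - y ∈ Submodule.span A {x}) ∨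
    ∃ (β : Ordinal) (_ : β < α), ∃ z : M, AlphaEuclidean A β z ∧ z - y ∈ Submodule.span A {x}
termination_by α
/-- If the submodule generated by a list `σ` contains an `α`-Euclidean element,
then `σ` is `α`-good. -/
theorem alphaGood_of_mem_span_alphaEuclidean {A M : Type*} [Ring A] [AddCommGroup M]
    [Module A M] (α : Ordinal) (σ : List M) (x : M)
    (hx : x ∈ Submodule.span A {y | y ∈ σ}) (hE : AlphaEuclidean A α x) :
    AlphaGood A α σ := by
  induction α using Ordinal.induction generalizing σ x with
  | h α ih =>
    rw [AlphaEuclidean] at hE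
    rw [AlphaGood]
    intro y
    have hxle : Submodule.span A {x} ≤ Submodule.span A {w | w ∈ σ} :=
      (Submodule.span_singleton_le_iff_mem x _).mpr hx
    have hmono : Submodule.span A {w | w ∈ σ} ≤ Submodule.span A {w | w ∈ σ ++ [y]} :=
      Submodule.span_mono (fun w hw => by simp [List.mem_append]; exact Or.inl hw)
    rcases hE y with ⟨z, hz0, hzy⟩ | ⟨β, hβ, z, hzE, hzy⟩
    · left
      refine ⟨σ, y, rfl, ?_⟩
      have : -y ∈ Submodule.span A {w | w ∈ σ} := hxle (by subst hz0; simpa using hzy)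
      simpa using Submodule.neg_mem _ this
    · right
      refine ⟨β, hβ, ih β hβ (σ ++ [y]) z ?_ hzE⟩
      have hy : y ∈ Submodule.span A {w | w ∈ σ ++ [y]} :=
        Submodule.subset_span (by simp)
      have := Submodule.add_mem _ (hmono (hxle hzy)) hy
      simpa using this
end

section
/- If M is an α-Euclidean module over a ring A, then M is α-Noetherian. -/
open Ordinal

section Aux
variable (A : Type*) {M : Type*} [Ring A] [AddCommGroup M] [Module A M]

lemma goodList_append_iff (ρ : List M) (w : M) :
    GoodList A (ρ ++ [w]) ↔ w ∈ Submodule.span A {m | m ∈ ρ} := by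
  constructor
  · rintro ⟨l, x, h, hx⟩
    have hl : l = ρ := by
      have := congrArg List.dropLast h
      simpa using this.symm
    have hxw : x = w := by
      have := congrArg List.getLast? h
      simpa using this.symm
    subst hl; subst hxw; exact hx
  · intro h; exact ⟨ρ, w, rfl, h⟩

lemma span_le_congr (σ τ : List M) (y z : M)
    (h : y - z ∈ Submodule.span A {m | m ∈ σ}) :
    Submodule.span A ({m | m ∈ σ ++ y :: τ} : Set M) ≤
      Submodule.span A ({m | m ∈ σ ++ z :: τ} : Set M) := by
  rw [Submodule.span_le]
  intro m hm
  simp only [Set.mem_setOf_eq, List.mem_append, List.mem_cons] at hm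
  have hσ : Submodule.span A ({m | m ∈ σ} : Set M) ≤
      Submodule.span A ({m | m ∈ σ ++ z :: τ} : Set M) :=
    Submodule.span_mono (by intro a ha; simp only [Set.mem_setOf_eq] at ha ⊢; simp [ha])
  rcases hm with h1 | h2 | h3
  · exact Submodule.subset_span (by simp [h1])
  · subst h2
    have hz : z ∈ Submodule.span A ({m | m ∈ σ ++ z :: τ} : Set M) :=
      Submodule.subset_span (by simp)
    have hy : m = z + (m - z) := by abel
    rw [hy]
    exact Submodule.add_mem _ hz (hσ h)
  · exact Submodule.subset_span (by simp [h3])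

lemma span_eq_congr (σ τ : List M) (y z : M)
    (h : y - z ∈ Submodule.span A {m | m ∈ σ}) :
    Submodule.span A ({m | m ∈ σ ++ y :: τ} : Set M) =
      Submodule.span A ({m | m ∈ σ ++ z :: τ} : Set M) := by
  refine le_antisymm (span_le_congr A σ τ y z h) (span_le_congr A σ τ z y ?_)
  simpa using Submodule.neg_mem _ h

lemma alphaGood_congr (β : Ordinal) (σ : List M) (y z : M)
    (hyz : y - z ∈ Submodule.span A {m | m ∈ σ}) :
    ∀ τ : List M, AlphaGood A β (σ ++ z :: τ) → AlphaGood A β (σ ++ y :: τ) := by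
  induction β using Ordinal.induction with
  | h β IH =>
    intro τ hg
    rw [AlphaGood] at hg ⊢
    intro w
    rcases hg w with h | ⟨γ, hγ, h⟩
    · left
      rw [goodList_append_iff] at h ⊢
      rwa [span_eq_congr A σ τ y z hyz]
    · right
      refine ⟨γ, hγ, ?_⟩
      have h' : AlphaGood A γ (σ ++ z :: (τ ++ [w])) := by
        simpa only [List.cons_append, List.append_assoc] using h
      have := IH γ hγ (τ ++ [w]) h'
      simpa only [List.cons_append, List.append_assoc] using this

lemma alphaGood_of_euclidean (β : Ordinal) :
    ∀ x : M, AlphaEuclidean A β x → ∀ σ : List M, AlphaGood A β (σ ++ [x]) := by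
  induction β using Ordinal.induction with
  | h β IH =>
    intro x hx σ
    rw [AlphaGood]
    intro y
    rw [AlphaEuclidean] at hx
    have hxspan : Submodule.span A ({x} : Set M) ≤
        Submodule.span A ({m | m ∈ σ ++ [x]} : Set M) :=
      Submodule.span_mono (by intro a ha; simp only [Set.mem_singleton_iff] at ha; simp [ha])
    rcases hx y with ⟨z, hz0, hzy⟩ | ⟨γ, hγ, z, hzE, hzy⟩
    · left
      rw [goodList_append_iff]
      subst hz0
      have : y ∈ Submodule.span A ({x} : Set M) := by
        simpa using Submodule.neg_mem _ hzy
      exact hxspan this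
    · right
      refine ⟨γ, hγ, ?_⟩
      have hgz : AlphaGood A γ ((σ ++ [x]) ++ [z]) := IH γ hγ z hzE (σ ++ [x])
      have hyz : y - z ∈ Submodule.span A ({m | m ∈ σ ++ [x]} : Set M) := by
        apply hxspan
        simpa using Submodule.neg_mem _ hzy
      exact alphaGood_congr A γ (σ ++ [x]) y z hyz [] hgz
end Aux

/-- Every `α`-Euclidean module is `α`-Noetherian. -/
theorem alphaNoetherian_of_alphaEuclidean {A M : Type*} [Ring A] [AddCommGroup M]
    [Module A M] (α : Ordinal)
    (hE : ∀ x : M, x = 0 ∨ ∃ (β : Ordinal) (_ : β < α), AlphaEuclidean A β x) :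
    AlphaGood A α ([] : List M) := by
  rw [AlphaGood]
  intro x
  rcases hE x with h0 | ⟨β, hβ, hEx⟩
  · left
    rw [goodList_append_iff, h0]
    exact Submodule.zero_mem _
  · right
    exact ⟨β, hβ, alphaGood_of_euclidean A β x hEx []⟩
end

section
/- Let M be a module over a ring A, α an ordinal, f : [0,α) → M a function, and β ∈ [-1,α). If there exist n ∈ ℕ and a strictly decreasing sequence α_0 > ... > α_{n-1} in (β, α] such that the list [f(α_0),...,f(α_{n-1})] is β-good, then there exist m ∈ ℕ and a strictly decreasing sequence α_n > ... > α_{n+m-1} in [0, α_{n-1}) such that [f(α_0),...,f(α_{n+m-1})] is good (i.e., the last entry lies in the submodule generated by the previous entries). -/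
open Ordinal

/-- `BGood A β σ` for `β : WithBot Ordinal` means: `σ` is `β`-good, where
`⊥` plays the role of `-1` (so `BGood A ⊥ σ` means `σ` is good). -/
def BGood (A : Type*) {M : Type*} [Ring A] [AddCommGroup M] [Module A M]
    (β : WithBot Ordinal) (σ : List M) : Prop :=
  WithBot.recBotCoe (GoodList A σ) (fun γ => AlphaGood A γ σ) β

lemma strictAnti_snoc {n : ℕ} {g : Fin n → Ordinal} (hg : StrictAnti g) {γ : Ordinal}
    (hγ : ∀ i, γ < g i) : StrictAnti (Fin.snoc g γ) := by
  intro i j hij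
  induction j using Fin.lastCases with
  | last =>
    have hne : i ≠ Fin.last n := ne_of_lt hij
    rw [Fin.snoc_last, ← Fin.castSucc_castPred i hne, Fin.snoc_castSucc]
    exact hγ _
  | cast j' =>
    have hne : i ≠ Fin.last n :=
      ne_of_lt (lt_of_lt_of_le hij (Fin.le_last _))
    rw [Fin.snoc_castSucc, ← Fin.castSucc_castPred i hne, Fin.snoc_castSucc]
    refine hg ?_
    have hv : (i.castPred hne : ℕ) = (i : ℕ) := rfl
    simp only [Fin.lt_def, hv]
    exact hij

theorem aux_extend {A M : Type*} [Ring A] [AddCommGroup M] [Module A M]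
    (α : Ordinal) (f : Ordinal → M) (γ : Ordinal) :
    γ < α → ∀ (n : ℕ) (g : Fin n → Ordinal), StrictAnti g →
      (∀ i, γ < g i ∧ g i ≤ α) → AlphaGood A γ (List.ofFn fun i => f (g i)) →
      ∃ (m : ℕ) (g' : Fin (n + m) → Ordinal),
        (∀ i : Fin n, g' (Fin.castAdd m i) = g i) ∧ StrictAnti g' ∧
        (∀ j : Fin m, g' (Fin.natAdd n j) < α) ∧
        GoodList A (List.ofFn fun i => f (g' i)) := by
  induction γ using Ordinal.induction with
  | _ γ IH =>
  intro hγα n g hg hrange hgood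
  rw [AlphaGood] at hgood
  set g1 : Fin (n + 1) → Ordinal := Fin.snoc g γ with hg1
  have hlist : (List.ofFn fun i => f (g i)) ++ [f γ] = List.ofFn fun i => f (g1 i) := by
    rw [List.ofFn_succ']
    simp [g1, List.concat_eq_append]
  have hg1anti : StrictAnti g1 := strictAnti_snoc hg (fun i => (hrange i).1)
  have hg1cast : ∀ i : Fin n, g1 (Fin.castAdd 1 i) = g i := by
    intro i
    have hc : Fin.castAdd 1 i = Fin.castSucc i := rfl
    rw [hc, hg1, Fin.snoc_castSucc]
  rcases hgood (f γ) with hgood' | ⟨δ, hδγ, hgood'⟩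
  · refine ⟨1, g1, hg1cast, hg1anti, ?_, ?_⟩
    · intro j
      have hj := j.isLt
      have : Fin.natAdd n j = Fin.last n := by
        ext; simp only [Fin.coe_natAdd, Fin.val_last]; omega
      rw [this]
      simpa [g1] using hγα
    · rwa [hlist] at hgood'
  · rw [hlist] at hgood'
    have hrange1 : ∀ i, δ < g1 i ∧ g1 i ≤ α := by
      intro i
      induction i using Fin.lastCases with
      | last => exact ⟨by simpa [g1] using hδγ, by simpa [g1] using le_of_lt hγα⟩
      | cast i' =>
        refine ⟨lt_trans hδγ ?_, ?_⟩
        · simpa [g1] using (hrange i').1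
        · simpa [g1] using (hrange i').2
    obtain ⟨m, g2, h1, h2, h3, h4⟩ :=
      IH δ hδγ (lt_trans hδγ hγα) (n + 1) g1 hg1anti hrange1 hgood'
    have he : n + 1 + m = n + (1 + m) := by omega
    refine ⟨1 + m, fun i => g2 (Fin.cast he.symm i), ?_, ?_, ?_, ?_⟩
    · intro i
      show g2 (Fin.cast he.symm (Fin.castAdd (1 + m) i)) = g i
      have hh := h1 (Fin.castAdd 1 i)
      rw [hg1cast] at hh
      rw [show Fin.cast he.symm (Fin.castAdd (1 + m) i) = Fin.castAdd m (Fin.castAdd 1 i)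
        from by ext; simp]
      exact hh
    · intro i j hij
      exact h2 (show (Fin.cast he.symm i) < (Fin.cast he.symm j) from hij)
    · intro j
      show g2 (Fin.cast he.symm (Fin.natAdd n j)) < α
      have hjlt := j.isLt
      rcases Nat.eq_zero_or_pos j.val with hj | hj
      · rw [show Fin.cast he.symm (Fin.natAdd n j) = Fin.castAdd m (Fin.last n)
          from by ext; simp [hj], h1]
        rw [show Fin.last n = Fin.natAdd n (0 : Fin 1) from by ext; simp] at *
        simpa [g1, Fin.snoc] using hγα
      · rw [show Fin.cast he.symm (Fin.natAdd n j) =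
            Fin.natAdd (n + 1) ⟨j.val - 1, by omega⟩ from by ext; simp; omega]
        exact h3 _
    · have : (List.ofFn fun i => f (g2 i)) =
          List.ofFn fun i : Fin (n + (1 + m)) => f (g2 (Fin.cast he.symm i)) := by
        exact List.ofFn_congr he _
      rwa [this] at h4

/-- If `[f α₀, …, f αₙ₋₁]` is `β`-good for a strictly decreasing sequence
`α₀ > … > αₙ₋₁` in `(β, α]` (with `β ∈ [-1, α)`), then the sequence can be
extended by a strictly decreasing sequence of ordinals in `[0, αₙ₋₁)` (in
particular in `[0, α)`) so that the corresponding list of values of `f` is good. -/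
theorem extend_to_good_list {A M : Type*} [Ring A] [AddCommGroup M] [Module A M]
    (α : Ordinal) (f : Ordinal → M) (β : WithBot Ordinal) (hβ : β < (α : WithBot Ordinal))
    (n : ℕ) (g : Fin n → Ordinal) (hg : StrictAnti g)
    (hrange : ∀ i : Fin n, β < (g i : WithBot Ordinal) ∧ g i ≤ α)
    (hgood : BGood A β (List.ofFn fun i => f (g i))) :
    ∃ (m : ℕ) (g' : Fin (n + m) → Ordinal),
      (∀ i : Fin n, g' (Fin.castAdd m i) = g i) ∧ StrictAnti g' ∧
      (∀ j : Fin m, g' (Fin.natAdd n j) < α) ∧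
      GoodList A (List.ofFn fun i => f (g' i)) := by
  cases β with
  | bot =>
    exact ⟨0, g, fun i => rfl, hg, fun j => j.elim0, hgood⟩
  | coe γ =>
    have hγα : γ < α := by exact_mod_cast hβ
    have hrange' : ∀ i, γ < g i ∧ g i ≤ α := by
      intro i
      exact ⟨by exact_mod_cast (hrange i).1, (hrange i).2⟩
    exact aux_extend α f γ hγα n g hg hrange' hgood
end

section
/- Let n ∈ ℕ and A be a commutative ring. If A is α-Noetherian for some ordinal α < ω^n, then the Krull dimension of A is less than n, in the sense that for all x_0,...,x_{n-1} ∈ A there exist e_0,...,e_{n-1} ≥ 0 such that x_0^{e_0}···x_{n-1}^{e_{n-1}} ∈ ⟨x_0^{e_0+1}, x_0^{e_0}x_1^{e_1+1}, ..., x_0^{e_0}···x_{n-2}^{e_{n-2}}x_{n-1}^{e_{n-1}+1}⟩. -/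
open Ordinal

/-- Lombardi's elementary characterization of `Kdim A < n`. -/
def KdimLt (A : Type*) [CommRing A] (n : ℕ) : Prop :=
  ∀ x : Fin n → A, ∃ e : Fin n → ℕ,
    (∏ i, x i ^ e i) ∈ Ideal.span (Set.range fun i : Fin n =>
      (∏ j ∈ Finset.univ.filter (fun j => j < i), x j ^ e j) * x i ^ (e i + 1))
universe u
section
variable {A : Type*} [CommRing A]

lemma prefix_succ {n : ℕ} (f : Fin (n+1) → A) (i : Fin n) :
    ∏ j ∈ Finset.univ.filter (fun j => j < i.succ), f j
      = f 0 * ∏ j ∈ Finset.univ.filter (fun j => j < i), f j.succ := by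
  rw [Finset.prod_filter, Finset.prod_filter, Fin.prod_univ_succ]
  simp [Fin.succ_pos, Fin.succ_lt_succ_iff]

lemma prefix_zero {n : ℕ} (f : Fin (n+1) → A) :
    ∏ j ∈ Finset.univ.filter (fun j => j < (0 : Fin (n+1))), f j = 1 := by
  simp

def Gens {n : ℕ} (x : Fin n → A) (e : Fin n → ℕ) (m : A) : Set A :=
  Set.range fun i : Fin n =>
    ((∏ j ∈ Finset.univ.filter (fun j => j < i), x j ^ e j) * x i ^ (e i + 1)) * m

def MainStmt (A : Type*) [CommRing A] (n : ℕ) : Prop :=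
  ∀ (ρ γ : Ordinal.{u}), ρ < omega0 ^ (n:Ordinal) → ∀ (σ : List A) (m : A) (x : Fin n → A),
    AlphaGood A (γ + ρ) σ →
    (∃ e : Fin n → ℕ,
        (∏ i, x i ^ e i) * m ∈ Submodule.span A ({y | y ∈ σ} ∪ Gens x e m))
    ∨ (∃ τ : List A, (∀ z ∈ τ, ∃ r : A, z = r * m) ∧
        ∃ β < γ, AlphaGood A β (σ ++ τ))

lemma main_zero : MainStmt.{u} A 0 := by
  intro ρ γ hρ σ m x hg
  rw [Nat.cast_zero, opow_zero] at hρ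
  rw [Ordinal.lt_one_iff_zero.1 hρ, add_zero] at hg
  rw [AlphaGood] at hg
  rcases hg m with ⟨l, y, heq, hmem⟩ | ⟨β, hβ, hg'⟩
  · obtain ⟨h1, h2⟩ := List.append_inj' heq rfl
    obtain rfl : m = y := by simpa using h2
    subst h1
    refine Or.inl ⟨fun i => i.elim0, ?_⟩
    simpa using Submodule.span_mono Set.subset_union_left hmem
  · refine Or.inr ⟨[m], ?_, β, hβ, hg'⟩
    intro z hz
    rw [List.mem_singleton] at hz
    exact ⟨1, by rw [hz, one_mul]⟩

/-- run the `n`-variable strategy on base element `x 0 ^ c * m` -/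
lemma block {n : ℕ} (IH : MainStmt.{u} A n) (c : ℕ) (ρ γ : Ordinal.{u})
    (hρ : ρ < omega0 ^ (n:Ordinal)) (σ : List A) (m : A) (x : Fin (n+1) → A)
    (hg : AlphaGood A (γ + ρ) σ) :
    (∃ e : Fin (n+1) → ℕ, e 0 = c ∧
        (∏ i, x i ^ e i) * m ∈ Submodule.span A ({y | y ∈ σ} ∪ Gens x e m))
    ∨ (∃ τ : List A, (∀ z ∈ τ, ∃ r : A, z = r * (x 0 ^ c * m)) ∧
        ∃ β < γ, AlphaGood A β (σ ++ τ)) := by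
  rcases IH ρ γ hρ σ (x 0 ^ c * m) (fun i => x i.succ) hg with ⟨e', hmem⟩ | hexit
  · left
    refine ⟨Fin.cons c e', Fin.cons_zero _ _, ?_⟩
    have hL : (∏ i, x i ^ (Fin.cons c e' : Fin (n+1) → ℕ) i) * m
        = (∏ i : Fin n, x i.succ ^ e' i) * (x 0 ^ c * m) := by
      rw [Fin.prod_univ_succ]
      simp only [Fin.cons_zero, Fin.cons_succ]
      ring
    rw [hL]
    refine Submodule.span_le.2 ?_ hmem
    apply Set.union_subset
    · exact fun y hy => Submodule.subset_span (Set.mem_union_left _ hy)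
    · rintro z ⟨i, rfl⟩
      apply Submodule.subset_span
      refine Set.mem_union_right _ ⟨i.succ, ?_⟩
      show ((∏ j ∈ Finset.univ.filter (fun j => j < i.succ),
          x j ^ (Fin.cons c e' : Fin (n+1) → ℕ) j)
          * x i.succ ^ ((Fin.cons c e' : Fin (n+1) → ℕ) i.succ + 1)) * m = _
      rw [prefix_succ (fun j => x j ^ (Fin.cons c e' : Fin (n+1) → ℕ) j) i]
      simp only [Fin.cons_zero, Fin.cons_succ]
      ring
  · exact Or.inr hexit

lemma aux {n : ℕ} (IH : MainStmt.{u} A n) : ∀ c : ℕ, ∀ (ρ γ : Ordinal.{u}),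
    ρ < omega0 ^ (n:Ordinal) * (c+1) → ∀ (σ : List A) (m : A) (x : Fin (n+1) → A),
    AlphaGood A (γ + ρ) σ →
    (∃ e : Fin (n+1) → ℕ, e 0 ≤ c ∧
        (∏ i, x i ^ e i) * m ∈ Submodule.span A ({y | y ∈ σ} ∪ Gens x e m))
    ∨ (∃ τ : List A, (∀ z ∈ τ, ∃ r : A, z = r * m) ∧
        ∃ β < γ, AlphaGood A β (σ ++ τ)) := by
  intro c
  induction c with
  | zero =>
    intro ρ γ hρ σ m x hg
    rw [Nat.cast_zero, zero_add, mul_one] at hρ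
    rcases block IH 0 ρ γ hρ σ m x hg with ⟨e, he0, hmem⟩ | ⟨τ, hτ, hex⟩
    · exact Or.inl ⟨e, he0.le, hmem⟩
    · refine Or.inr ⟨τ, fun z hz => ?_, hex⟩
      obtain ⟨r, hr⟩ := hτ z hz
      exact ⟨r, by rw [hr, pow_zero, one_mul]⟩
  | succ c ih =>
    intro ρ γ hρ σ m x hg
    by_cases hlt : ρ < omega0 ^ (n:Ordinal) * (c+1)
    · rcases ih ρ γ hlt σ m x hg with ⟨e, he0, hmem⟩ | hexit
      · exact Or.inl ⟨e, he0.trans (Nat.le_succ c), hmem⟩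
      · exact Or.inr hexit
    · have hge : omega0 ^ (n:Ordinal) * (c+1) ≤ ρ := le_of_not_gt hlt
      set C : Ordinal.{u} := omega0 ^ (n:Ordinal) * (c+1) with hC
      set ρ'' : Ordinal.{u} := ρ - C with hρ''def
      have hsum : C + ρ'' = ρ := Ordinal.add_sub_cancel_of_le hge
      have hρ'' : ρ'' < omega0 ^ (n:Ordinal) := by
        have h2 : ρ < C + omega0 ^ (n:Ordinal) := by
          rw [hC, ← mul_succ]
          have hcast : omega0 ^ (n:Ordinal) * (((c+1:ℕ):Ordinal)+1)
              = omega0 ^ (n:Ordinal) * (Order.succ ((c:Ordinal)+1)) := by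
            push_cast
            rw [Ordinal.add_one_eq_succ]
          exact lt_of_lt_of_le hρ (le_of_eq hcast)
        rw [← hsum] at h2
        exact (add_lt_add_iff_left C).1 h2
      have hg' : AlphaGood A ((γ + C) + ρ'') σ := by rwa [add_assoc, hsum]
      rcases block IH (c+1) ρ'' (γ + C) hρ'' σ m x hg' with ⟨e, he0, hmem⟩ | ⟨τ, hτ, β, hβ, hgβ⟩
      · exact Or.inl ⟨e, he0.le, hmem⟩
      · rcases lt_or_ge β γ with hβγ | hγβ
        · refine Or.inr ⟨τ, fun z hz => ?_, β, hβγ, hgβ⟩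
          obtain ⟨r, hr⟩ := hτ z hz
          exact ⟨r * x 0 ^ (c+1), by rw [hr]; ring⟩
        · have hδsum : γ + (β - γ) = β := Ordinal.add_sub_cancel_of_le hγβ
          have hδ : β - γ < C := by
            rw [← add_lt_add_iff_left γ, hδsum]; exact hβ
          rw [← hδsum] at hgβ
          rcases ih (β - γ) γ hδ (σ ++ τ) m x hgβ with ⟨e, he0, hmem⟩ | ⟨τ₂, hτ₂, β₂, hβ₂, hg₂⟩
          · refine Or.inl ⟨e, he0.trans (Nat.le_succ c), ?_⟩
            refine Submodule.span_le.2 ?_ hmem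
            apply Set.union_subset
            · intro y hy
              rw [Set.mem_setOf_eq, List.mem_append] at hy
              rcases hy with hy | hy
              · exact Submodule.subset_span (Set.mem_union_left _ hy)
              · -- y ∈ τ : multiple of x 0 ^ (c+1) * m, absorbed by generator 0
                obtain ⟨r, hr⟩ := hτ y hy
                have hgen : ((∏ j ∈ Finset.univ.filter (fun j => j < (0 : Fin (n+1))), x j ^ e j)
                    * x 0 ^ (e 0 + 1)) * m ∈ Submodule.span A ({y | y ∈ σ} ∪ Gens x e m) :=
                  Submodule.subset_span (Set.mem_union_right _ ⟨0, rfl⟩)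
                rw [prefix_zero, one_mul] at hgen
                have hsm := Submodule.smul_mem _ (r * x 0 ^ (c - e 0)) hgen
                rw [_root_.smul_eq_mul] at hsm
                rw [SetLike.mem_coe]
                convert hsm using 1
                rw [hr]
                have hpow : x 0 ^ (c+1) = x 0 ^ (c - e 0) * x 0 ^ (e 0 + 1) := by
                  rw [← pow_add]
                  congr 1
                  omega
                rw [hpow]; ring
            · exact fun z hz => Submodule.subset_span (Set.mem_union_right _ hz)
          · refine Or.inr ⟨τ ++ τ₂, fun z hz => ?_, β₂, hβ₂, by rwa [List.append_assoc] at hg₂⟩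
            rw [List.mem_append] at hz
            rcases hz with hz | hz
            · obtain ⟨r, hr⟩ := hτ z hz
              exact ⟨r * x 0 ^ (c+1), by rw [hr]; ring⟩
            · exact hτ₂ z hz

lemma main_all (n : ℕ) : MainStmt.{u} A n := by
  induction n with
  | zero => exact main_zero
  | succ n IH =>
    intro ρ γ hρ σ m x hg
    have hex : ∃ c : ℕ, ρ < omega0 ^ (n:Ordinal) * (c+1) := by
      have hne : (omega0 ^ (n:Ordinal)) ≠ 0 := (opow_pos _ omega0_pos).ne'
      have hdiv : ρ / omega0 ^ (n:Ordinal) < omega0 := by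
        rw [Ordinal.div_lt hne]
        have hcast : omega0 ^ (((n+1:ℕ)):Ordinal) = omega0 ^ (n:Ordinal) * omega0 := by
          push_cast
          rw [opow_add, opow_one]
        rw [← hcast]
        exact hρ
      obtain ⟨c, hc⟩ := lt_omega0.1 hdiv
      exact ⟨c, by rw [← hc]; exact Ordinal.lt_mul_succ_div ρ hne⟩
    obtain ⟨c, hc⟩ := hex
    rcases aux IH c ρ γ hc σ m x hg with ⟨e, _, hmem⟩ | hexit
    · exact Or.inl ⟨e, hmem⟩
    · exact Or.inr hexit

end

/-- If a commutative ring `A` is `α`-Noetherian for some `α < ω ^ n`, then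
`Kdim A < n` in the sense of Lombardi. -/
theorem kdim_lt_of_alphaNoetherian (n : ℕ) (A : Type*) [CommRing A]
    (h : ∃ α < Ordinal.omega0 ^ (n : Ordinal), AlphaGood A α ([] : List A)) :
    KdimLt A n := by
  obtain ⟨α, hα, hg⟩ := h
  intro x
  rcases main_all n α 0 hα [] 1 x (by rwa [zero_add]) with ⟨e, hmem⟩ | ⟨τ, _, β, hβ, _⟩
  · refine ⟨e, ?_⟩
    have h1 : {y | y ∈ ([] : List A)} = (∅ : Set A) := by ext y; simp
    have h2 : Gens x e (1:A) = Set.range (fun i : Fin n =>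
        (∏ j ∈ Finset.univ.filter (fun j => j < i), x j ^ e j) * x i ^ (e i + 1)) := by
      simp only [Gens, mul_one]
    rw [h1, Set.empty_union, h2, mul_one] at hmem
    exact hmem
  · exact absurd hβ (by simp)
end

section
/- (Quantitative Hilbert basis theorem) Let α be an ordinal and M an α-Noetherian module over a ring A. Then the polynomial module M[X] is an (ω ⊗ α)-Noetherian module over A[X], where ⊗ denotes the Hessenberg natural product of ordinals. -/
open Ordinal

universe u

namespace Ordinal

/-- Natural (Hessenberg) addition, as formerly in Mathlib's `SetTheory/Ordinal/NaturalOps`. -/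
noncomputable def nadd (a b : Ordinal.{u}) : Ordinal.{u} :=
  max (⨆ x : Set.Iio a, Order.succ (nadd x.1 b)) (⨆ x : Set.Iio b, Order.succ (nadd a x.1))
termination_by (a, b)
decreasing_by
  · exact Prod.Lex.left _ _ x.2
  · exact Prod.Lex.right _ x.2

/-- Natural (Hessenberg) multiplication, as formerly in Mathlib's
`SetTheory/Ordinal/NaturalOps`. -/
noncomputable def nmul (a b : Ordinal.{u}) : Ordinal.{u} :=
  sInf {c | ∀ a' < a, ∀ b' < b, nadd (nmul a' b) (nmul a b') < nadd c (nmul a' b')}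
termination_by (a, b)
decreasing_by
  · exact Prod.Lex.left _ _ ‹a' < a›
  · exact Prod.Lex.right _ ‹b' < b›
  · exact Prod.Lex.left _ _ ‹a' < a›

end Ordinal

noncomputable section

variable (A M : Type*) [Ring A] [AddCommGroup M] [Module A M]

/-- Scalar multiplication by `a : A`, coefficientwise on `M[X] = ℕ →₀ M`, as a
ring homomorphism into additive endomorphisms. -/
def coeffMulHom : A →+* AddMonoid.End (ℕ →₀ M) where
  toFun a := Finsupp.mapRange.addMonoidHom (DistribMulAction.toAddMonoidHom M a)
  map_one' := by
    refine DFunLike.ext _ _ fun f => Finsupp.ext fun n => ?_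
    show (1 : A) • f n = f n
    exact one_smul A (f n)
  map_mul' a b := by
    refine DFunLike.ext _ _ fun f => Finsupp.ext fun n => ?_
    show (a * b) • f n = a • b • f n
    exact mul_smul a b (f n)
  map_zero' := by
    refine DFunLike.ext _ _ fun f => Finsupp.ext fun n => ?_
    show (0 : A) • f n = 0
    exact zero_smul A (f n)
  map_add' a b := by
    refine DFunLike.ext _ _ fun f => Finsupp.ext fun n => ?_
    show (a + b) • f n = a • f n + b • f n
    exact add_smul a b (f n)

/-- Multiplication by `X` on `M[X] = ℕ →₀ M` (degree shift). -/
def shiftEnd : AddMonoid.End (ℕ →₀ M) :=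
  Finsupp.mapDomain.addMonoidHom (· + 1)

theorem coeffMulHom_commute_shiftEnd (a : A) :
    Commute (coeffMulHom A M a) (shiftEnd M) := by
  refine DFunLike.ext _ _ fun f => ?_
  show ((coeffMulHom A M a : (ℕ →₀ M) →+ (ℕ →₀ M)).comp (shiftEnd M)) f =
    ((shiftEnd M : (ℕ →₀ M) →+ (ℕ →₀ M)).comp (coeffMulHom A M a)) f
  simp only [AddMonoidHom.comp_apply, coeffMulHom, shiftEnd, RingHom.coe_mk,
    MonoidHom.coe_mk, OneHom.coe_mk, Finsupp.mapRange.addMonoidHom_apply,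
    Finsupp.mapDomain.addMonoidHom_apply]
  exact (Finsupp.mapDomain_mapRange _ _ _ (map_zero _) (smul_add a)).symm

/-- The `A[X]`-module structure on the polynomial module `M[X] = ℕ →₀ M`:
`(∑ aᵢ Xⁱ) • m = ∑ aᵢ • (m shifted by i)`.  This works for an arbitrary
(possibly noncommutative) ring `A`. -/
instance polyModule : Module (Polynomial A) (ℕ →₀ M) :=
  Module.compHom _
    (Polynomial.eval₂RingHom' (coeffMulHom A M) (shiftEnd M)
      (coeffMulHom_commute_shiftEnd A M))

/-! ### Ordinal arithmetic toolkit -/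

infixl:65 " ♯ " => Ordinal.nadd

infixl:70 " ⨳ " => Ordinal.nmul

namespace Ordinal

theorem lt_nadd_iff {a b c : Ordinal.{u}} :
    a < b ♯ c ↔ (∃ b' < b, a ≤ b' ♯ c) ∨ ∃ c' < c, a ≤ b ♯ c' := by
  rw [nadd, lt_max_iff, Ordinal.lt_iSup_iff, Ordinal.lt_iSup_iff]
  simp only [Order.lt_succ_iff, Subtype.exists, Set.mem_Iio, exists_prop]

theorem nadd_le_iff {a b c : Ordinal.{u}} :
    b ♯ c ≤ a ↔ (∀ b' < b, b' ♯ c < a) ∧ ∀ c' < c, b ♯ c' < a := by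
  rw [← not_lt, lt_nadd_iff]
  simp only [not_or, not_exists, not_and, not_le]

theorem nadd_lt_nadd_left {b c : Ordinal.{u}} (h : b < c) (a : Ordinal.{u}) : a ♯ b < a ♯ c :=
  lt_nadd_iff.2 (Or.inr ⟨b, h, le_rfl⟩)

theorem nadd_lt_nadd_right {b c : Ordinal.{u}} (h : b < c) (a : Ordinal.{u}) : b ♯ a < c ♯ a :=
  lt_nadd_iff.2 (Or.inl ⟨b, h, le_rfl⟩)

theorem nadd_le_nadd_left {b c : Ordinal.{u}} (h : b ≤ c) (a : Ordinal.{u}) : a ♯ b ≤ a ♯ c := by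
  rcases h.lt_or_eq with h | rfl
  · exact (nadd_lt_nadd_left h a).le
  · exact le_rfl

theorem nadd_le_nadd_right {b c : Ordinal.{u}} (h : b ≤ c) (a : Ordinal.{u}) : b ♯ a ≤ c ♯ a := by
  rcases h.lt_or_eq with h | rfl
  · exact (nadd_lt_nadd_right h a).le
  · exact le_rfl

theorem nadd_lt_nadd_of_lt_of_le {a b c d : Ordinal.{u}} (h1 : a < b) (h2 : c ≤ d) :
    a ♯ c < b ♯ d :=
  (nadd_lt_nadd_right h1 c).trans_le (nadd_le_nadd_left h2 b)

theorem nadd_lt_nadd_of_le_of_lt {a b c d : Ordinal.{u}} (h1 : a ≤ b) (h2 : c < d) :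
    a ♯ c < b ♯ d :=
  (nadd_le_nadd_right h1 c).trans_lt (nadd_lt_nadd_left h2 b)

theorem lt_of_nadd_lt_nadd_right {a b c : Ordinal.{u}} (h : a ♯ c < b ♯ c) : a < b := by
  by_contra h'
  exact absurd h (not_lt.2 (nadd_le_nadd_right (not_lt.1 h') c))

theorem nadd_comm (a b : Ordinal.{u}) : a ♯ b = b ♯ a := by
  induction a using Ordinal.induction generalizing b with
  | h a IHa =>
  induction b using Ordinal.induction with
  | h b IHb =>
  refine le_antisymm (nadd_le_iff.2 ⟨fun a' ha => ?_, fun b' hb => ?_⟩)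
    (nadd_le_iff.2 ⟨fun b' hb => ?_, fun a' ha => ?_⟩)
  · rw [IHa a' ha b]; exact nadd_lt_nadd_left ha b
  · rw [IHb b' hb]; exact nadd_lt_nadd_right hb a
  · rw [← IHb b' hb]; exact nadd_lt_nadd_left hb a
  · rw [← IHa a' ha b]; exact nadd_lt_nadd_right ha b

@[simp] theorem nadd_zero (a : Ordinal.{u}) : a ♯ 0 = a := by
  induction a using Ordinal.induction with
  | h a IH =>
  refine le_antisymm (nadd_le_iff.2 ⟨fun a' ha => ?_, fun c hc => (not_lt_zero hc).elim⟩)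
    (le_of_forall_lt fun c hc => ?_)
  · rw [IH a' ha]; exact ha
  · exact lt_nadd_iff.2 (Or.inl ⟨c, hc, (IH c hc).ge⟩)

@[simp] theorem zero_nadd (a : Ordinal.{u}) : 0 ♯ a = a := by
  rw [nadd_comm, nadd_zero]

theorem nadd_one (a : Ordinal.{u}) : a ♯ 1 = Order.succ a := by
  induction a using Ordinal.induction with
  | h a IH =>
  refine le_antisymm (nadd_le_iff.2 ⟨fun a' ha => ?_, fun c hc => ?_⟩) ?_
  · rw [IH a' ha, Order.succ_lt_succ_iff]; exact ha
  · rw [Ordinal.lt_one_iff_zero] at hc; subst hc; rw [nadd_zero]; exact Order.lt_succ a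
  · rw [Order.succ_le_iff]
    calc a = a ♯ 0 := (nadd_zero a).symm
      _ < a ♯ 1 := nadd_lt_nadd_left zero_lt_one a

theorem add_le_nadd (a b : Ordinal.{u}) : a + b ≤ a ♯ b := by
  induction b using Ordinal.induction with
  | h b IH =>
  rcases eq_or_ne b 0 with rfl | hb
  · rw [add_zero, nadd_zero]
  · refine le_of_forall_lt fun c hc => ?_
    obtain ⟨d, hd, hcd⟩ := (Ordinal.lt_add_iff hb).1 hc
    exact hcd.trans_lt ((IH d hd).trans_lt (nadd_lt_nadd_left hd a))

theorem le_nadd_self (a b : Ordinal.{u}) : a ≤ a ♯ b :=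
  le_self_add.trans (add_le_nadd a b)

theorem nadd_assoc (a b c : Ordinal.{u}) : a ♯ b ♯ c = a ♯ (b ♯ c) := by
  induction a using Ordinal.induction generalizing b c with
  | h a IHa =>
  induction b using Ordinal.induction generalizing c with
  | h b IHb =>
  induction c using Ordinal.induction with
  | h c IHc =>
  apply le_antisymm
  · refine nadd_le_iff.2 ⟨fun x hx => ?_, fun c' hc => ?_⟩
    · rcases lt_nadd_iff.1 hx with ⟨a', ha, hx⟩ | ⟨b', hb, hx⟩
      · calc x ♯ c ≤ a' ♯ b ♯ c := nadd_le_nadd_right hx c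
          _ = a' ♯ (b ♯ c) := IHa a' ha b c
          _ < a ♯ (b ♯ c) := nadd_lt_nadd_right ha _
      · calc x ♯ c ≤ a ♯ b' ♯ c := nadd_le_nadd_right hx c
          _ = a ♯ (b' ♯ c) := IHb b' hb c
          _ < a ♯ (b ♯ c) := nadd_lt_nadd_left (nadd_lt_nadd_right hb c) a
    · rw [IHc c' hc]; exact nadd_lt_nadd_left (nadd_lt_nadd_left hc b) a
  · refine nadd_le_iff.2 ⟨fun a' ha => ?_, fun y hy => ?_⟩
    · rw [← IHa a' ha b c]; exact nadd_lt_nadd_right (nadd_lt_nadd_right ha b) c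
    · rcases lt_nadd_iff.1 hy with ⟨b', hb, hy⟩ | ⟨c', hc, hy⟩
      · calc a ♯ y ≤ a ♯ (b' ♯ c) := nadd_le_nadd_left hy a
          _ = a ♯ b' ♯ c := (IHb b' hb c).symm
          _ < a ♯ b ♯ c := nadd_lt_nadd_right (nadd_lt_nadd_left hb a) c
      · calc a ♯ y ≤ a ♯ (b ♯ c') := nadd_le_nadd_left hy a
          _ = a ♯ b ♯ c' := (IHc c' hc).symm
          _ < a ♯ b ♯ c := nadd_lt_nadd_left hc _

instance nadd_isAssoc : Std.Associative (α := Ordinal.{u}) Ordinal.nadd := ⟨nadd_assoc⟩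

instance nadd_isComm : Std.Commutative (α := Ordinal.{u}) Ordinal.nadd := ⟨nadd_comm⟩

theorem nadd_right_comm (a b c : Ordinal.{u}) : a ♯ b ♯ c = a ♯ c ♯ b := by
  rw [nadd_assoc, nadd_comm b, ← nadd_assoc]

theorem nmul_nonempty (a b : Ordinal.{u}) :
    {c : Ordinal.{u} | ∀ a' < a, ∀ b' < b, a' ⨳ b ♯ a ⨳ b' < c ♯ a' ⨳ b'}.Nonempty := by
  obtain ⟨c, hc⟩ : BddAbove (Set.range fun x : Set.Iio a × Set.Iio b =>
      x.1.1 ⨳ b ♯ a ⨳ x.2.1) := Ordinal.bddAbove_of_small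
  exact ⟨Order.succ c, fun a' ha b' hb =>
    (Order.lt_succ_iff.2 (hc ⟨(⟨a', ha⟩, ⟨b', hb⟩), rfl⟩)).trans_le (le_nadd_self _ _)⟩

theorem nmul_eq (a b : Ordinal.{u}) :
    a ⨳ b = sInf {c | ∀ a' < a, ∀ b' < b, a' ⨳ b ♯ a ⨳ b' < c ♯ a' ⨳ b'} := by
  rw [nmul]

theorem nmul_nadd_lt {a' a b' b : Ordinal.{u}} (ha : a' < a) (hb : b' < b) :
    a' ⨳ b ♯ a ⨳ b' < a ⨳ b ♯ a' ⨳ b' := by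
  have := csInf_mem (nmul_nonempty a b)
  rw [← nmul_eq] at this
  exact this a' ha b' hb

theorem nmul_nadd_le {a' a b' b : Ordinal.{u}} (ha : a' ≤ a) (hb : b' ≤ b) :
    a' ⨳ b ♯ a ⨳ b' ≤ a ⨳ b ♯ a' ⨳ b' := by
  rcases ha.lt_or_eq with ha | rfl
  · rcases hb.lt_or_eq with hb | rfl
    · exact (nmul_nadd_lt ha hb).le
    · rw [nadd_comm]
  · exact le_rfl

theorem lt_nmul_iff {a b c : Ordinal.{u}} :
    c < a ⨳ b ↔ ∃ a' < a, ∃ b' < b, c ♯ a' ⨳ b' ≤ a' ⨳ b ♯ a ⨳ b' := by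
  refine ⟨fun h => ?_, ?_⟩
  · by_contra H
    push_neg at H
    have hc : c ∈ {c | ∀ a' < a, ∀ b' < b, a' ⨳ b ♯ a ⨳ b' < c ♯ a' ⨳ b'} := H
    exact absurd (csInf_le' hc) (by rw [← nmul_eq]; exact not_le.2 h)
  · rintro ⟨a', ha, b', hb, h⟩
    exact lt_of_nadd_lt_nadd_right (h.trans_lt (nmul_nadd_lt ha hb))

theorem nmul_le_iff {a b c : Ordinal.{u}} :
    a ⨳ b ≤ c ↔ ∀ a' < a, ∀ b' < b, a' ⨳ b ♯ a ⨳ b' < c ♯ a' ⨳ b' := by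
  rw [← not_lt, lt_nmul_iff]
  simp only [not_exists, not_and, not_le]

theorem nmul_comm (a b : Ordinal.{u}) : a ⨳ b = b ⨳ a := by
  induction a using Ordinal.induction generalizing b with
  | h a IHa =>
  induction b using Ordinal.induction with
  | h b IHb =>
  rw [nmul_eq, nmul_eq b a]
  congr 1
  ext x
  simp only [Set.mem_setOf_eq]
  constructor
  · intro H b' hb a' ha
    have := H a' ha b' hb
    rw [IHa a' ha b, IHb b' hb, IHa a' ha b'] at this
    exact (nadd_comm _ _).trans_lt this
  · intro H a' ha b' hb
    have := H b' hb a' ha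
    rw [IHa a' ha b, IHb b' hb, IHa a' ha b']
    exact (nadd_comm _ _).trans_lt this

@[simp] theorem zero_nmul (a : Ordinal.{u}) : 0 ⨳ a = 0 :=
  le_antisymm (nmul_le_iff.2 fun _ ha => (not_lt_zero ha).elim) zero_le

@[simp] theorem nmul_zero (a : Ordinal.{u}) : a ⨳ 0 = 0 := by
  rw [nmul_comm, zero_nmul]

@[simp] theorem one_nmul (a : Ordinal.{u}) : 1 ⨳ a = a := by
  induction a using Ordinal.induction with
  | h a IH =>
  refine le_antisymm (nmul_le_iff.2 fun a' ha b' hb => ?_) (le_of_forall_lt fun c hc => ?_)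
  · rw [Ordinal.lt_one_iff_zero] at ha
    subst ha
    rw [zero_nmul, zero_nmul, zero_nadd, nadd_zero, IH b' hb]
    exact hb
  · exact lt_nmul_iff.2 ⟨0, zero_lt_one, c, hc, by
      rw [zero_nmul, zero_nmul, nadd_zero, zero_nadd, IH c hc]⟩

@[simp] theorem nmul_one (a : Ordinal.{u}) : a ⨳ 1 = a := by
  rw [nmul_comm, one_nmul]

theorem nmul_lt_nmul_of_pos_left {a b c : Ordinal.{u}} (h₁ : a < b) (h₂ : 0 < c) :
    c ⨳ a < c ⨳ b :=
  lt_nmul_iff.2 ⟨0, h₂, a, h₁, by rw [zero_nmul, zero_nmul, nadd_zero, zero_nadd]⟩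

theorem nmul_le_nmul_left {a b : Ordinal.{u}} (h : a ≤ b) (c : Ordinal.{u}) : c ⨳ a ≤ c ⨳ b := by
  rcases h.lt_or_eq with h | rfl
  · rcases (zero_le : (0 : Ordinal.{u}) ≤ c).lt_or_eq with hc | rfl
    · exact (nmul_lt_nmul_of_pos_left h hc).le
    · simp
  · exact le_rfl

theorem nmul_nadd (a b c : Ordinal.{u}) : a ⨳ (b ♯ c) = a ⨳ b ♯ a ⨳ c := by
  induction a using Ordinal.induction generalizing b c with
  | h a IHa =>
  induction b using Ordinal.induction generalizing c with
  | h b IHb =>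
  induction c using Ordinal.induction with
  | h c IHc =>
  apply le_antisymm
  · refine nmul_le_iff.2 fun a' ha d hd => ?_
    rw [IHa a' ha b c]
    rcases lt_nadd_iff.1 hd with ⟨b', hb, hd⟩ | ⟨c', hc, hd⟩
    · have h := nadd_lt_nadd_of_lt_of_le (nmul_nadd_lt ha hb) (nmul_nadd_le ha.le hd)
      rw [IHa a' ha b' c, IHb b' hb c] at h
      exact lt_of_nadd_lt_nadd_right (c := a ⨳ b' ♯ a' ⨳ b') (by convert h using 1 <;> ac_rfl)
    · have h := nadd_lt_nadd_of_lt_of_le (nmul_nadd_lt ha hc) (nmul_nadd_le ha.le hd)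
      rw [IHa a' ha b c', IHc c' hc] at h
      exact lt_of_nadd_lt_nadd_right (c := a ⨳ c' ♯ a' ⨳ c') (by convert h using 1 <;> ac_rfl)
  · refine nadd_le_iff.2 ⟨fun d hd => ?_, fun d hd => ?_⟩
    · obtain ⟨a', ha, b', hb, hd⟩ := lt_nmul_iff.1 hd
      have h := nadd_lt_nadd_of_le_of_lt hd (nmul_nadd_lt ha (nadd_lt_nadd_right hb c))
      rw [IHa a' ha b c, IHb b' hb c, IHa a' ha b' c] at h
      exact lt_of_nadd_lt_nadd_right (c := a' ⨳ b' ♯ a' ⨳ b ♯ a' ⨳ c ♯ a ⨳ b')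
        (by convert h using 1 <;> ac_rfl)
    · obtain ⟨a', ha, c', hc, hd⟩ := lt_nmul_iff.1 hd
      have h := nadd_lt_nadd_of_le_of_lt hd (nmul_nadd_lt ha (nadd_lt_nadd_left hc b))
      rw [IHa a' ha b c, IHc c' hc, IHa a' ha b c'] at h
      exact lt_of_nadd_lt_nadd_right (c := a' ⨳ c' ♯ a' ⨳ b ♯ a' ⨳ c ♯ a ⨳ c')
        (by convert h using 1 <;> ac_rfl)

theorem nadd_nmul (a b c : Ordinal.{u}) : (a ♯ b) ⨳ c = a ⨳ c ♯ b ⨳ c := by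
  rw [nmul_comm, nmul_nadd, nmul_comm, nmul_comm b]

end Ordinal

namespace HBTArith

theorem nadd_swap (x r y t : Ordinal) : (x ♯ r) ♯ (y ♯ t) = (x ♯ y) ♯ (r ♯ t) := by
  rw [nadd_assoc, ← nadd_assoc r, nadd_comm r y, nadd_assoc, ← nadd_assoc]

/-- If `P` is `♯`-principal, then `P * q ♯ r = P * q + r` for `r < P`. -/
theorem s_ident_aux {P : Ordinal} (hP : P ≠ 0)
    (hp : ∀ a : Ordinal, a < P → ∀ b : Ordinal, b < P → a ♯ b < P) :
    ∀ q r : Ordinal, r < P → P * q ♯ r = P * q + r := by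
  intro q
  induction q using Ordinal.induction with
  | h q IHq =>
    intro r
    induction r using Ordinal.induction with
    | h r IHr =>
      intro hr
      refine le_antisymm ?_ (add_le_nadd _ _)
      rw [nadd_le_iff]
      constructor
      · intro u hu
        have hq' : u / P < q := (Ordinal.div_lt hP).2 hu
        have hmod : u % P < P := Ordinal.mod_lt u hP
        calc u ♯ r = (P * (u / P) + u % P) ♯ r := by rw [Ordinal.div_add_mod]
          _ = (P * (u / P) ♯ (u % P)) ♯ r := by rw [IHq _ hq' _ hmod]
          _ = P * (u / P) ♯ ((u % P) ♯ r) := nadd_assoc _ _ _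
          _ = P * (u / P) + ((u % P) ♯ r) := IHq _ hq' _ (hp _ hmod _ hr)
          _ < P * (u / P) + P := add_lt_add_right (hp _ hmod _ hr) _
          _ = P * (u / P + 1) := by rw [mul_add_one]
          _ ≤ P * q := by
              apply mul_le_mul_right
              rw [Ordinal.add_one_eq_succ, Order.succ_le_iff]; exact hq'
          _ ≤ P * q + r := le_self_add
      · intro w hw
        calc P * q ♯ w = P * q + w := IHr w hw (hw.trans hr)
          _ < P * q + r := add_lt_add_right hw _

theorem a6_aux {P : Ordinal} (hP : P ≠ 0)
    (hp : ∀ a : Ordinal, a < P → ∀ b : Ordinal, b < P → a ♯ b < P) :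
    ∀ q : Ordinal, P * q ♯ P = P * (q + 1) := by
  intro q
  induction q using Ordinal.induction with
  | h q IH =>
    refine le_antisymm ?_ ?_
    · rw [nadd_le_iff]
      constructor
      · intro u hu
        have hq' : u / P < q := (Ordinal.div_lt hP).2 hu
        have hmod : u % P < P := Ordinal.mod_lt u hP
        calc u ♯ P = (P * (u / P) + u % P) ♯ P := by rw [Ordinal.div_add_mod]
          _ = (P * (u / P) ♯ (u % P)) ♯ P := by
              rw [s_ident_aux hP hp _ _ hmod]
          _ = (P * (u / P) ♯ P) ♯ (u % P) := by
              rw [nadd_assoc, nadd_comm (u % P) P, ← nadd_assoc]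
          _ = P * (u / P + 1) ♯ (u % P) := by rw [IH _ hq']
          _ = P * (u / P + 1) + (u % P) := s_ident_aux hP hp _ _ hmod
          _ < P * (u / P + 1) + P := add_lt_add_right hmod _
          _ = P * (u / P + 1 + 1) := by rw [mul_add_one P (u / P + 1)]
          _ ≤ P * (q + 1) := by
              apply mul_le_mul_right
              have : u / P + 1 ≤ q := by
                rw [Ordinal.add_one_eq_succ, Order.succ_le_iff]; exact hq'
              exact add_le_add_left this 1
      · intro w hw
        calc P * q ♯ w = P * q + w := s_ident_aux hP hp _ _ hw
          _ < P * q + P := add_lt_add_right hw _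
          _ = P * (q + 1) := by rw [mul_add_one]
    · rw [mul_add_one]
      exact add_le_nadd _ _

theorem fin_aux {P : Ordinal} (hP : P ≠ 0)
    (hp : ∀ a : Ordinal, a < P → ∀ b : Ordinal, b < P → a ♯ b < P) :
    ∀ (q : Ordinal) (n : ℕ), P * q ♯ P * n = P * (q + n) := by
  intro q n
  induction n with
  | zero => simp
  | succ n IH =>
    have h1 : ((n + 1 : ℕ) : Ordinal) = (n : Ordinal) + 1 := by push_cast; ring
    rw [h1, ← a6_aux hP hp (n : Ordinal), ← nadd_assoc, IH, a6_aux hP hp, add_assoc]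

/-- `ω ^ γ` is closed under natural addition. -/
theorem nadd_lt_opow : ∀ γ : Ordinal, ∀ a : Ordinal, a < omega0 ^ γ →
    ∀ b : Ordinal, b < omega0 ^ γ → a ♯ b < omega0 ^ γ := by
  intro γ
  induction γ using Ordinal.induction with
  | h γ IH =>
    intro a ha b hb
    rcases Ordinal.zero_or_succ_or_isSuccLimit γ with rfl | ⟨ε, rfl⟩ | hγ
    · simp only [opow_zero, Ordinal.lt_one_iff_zero] at ha hb
      subst ha; subst hb; simp
    · -- successor case
      have hε : ε < Order.succ ε := Order.lt_succ ε
      have hPne : (omega0 : Ordinal) ^ ε ≠ 0 := (opow_pos ε omega0_pos).ne'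
      have hp := IH ε hε
      rw [opow_succ] at ha hb ⊢
      set P := (omega0 : Ordinal) ^ ε with hPdef
      have hqa : a / P < omega0 := (Ordinal.div_lt hPne).2 ha
      have hqb : b / P < omega0 := (Ordinal.div_lt hPne).2 hb
      obtain ⟨ma, hma⟩ := Ordinal.lt_omega0.1 hqa
      obtain ⟨mb, hmb⟩ := Ordinal.lt_omega0.1 hqb
      have hra : a % P < P := Ordinal.mod_lt a hPne
      have hrb : b % P < P := Ordinal.mod_lt b hPne
      have hsum : a ♯ b = P * (ma + mb : ℕ) + (a % P ♯ b % P) := by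
        calc a ♯ b = (P * (a / P) + a % P) ♯ (P * (b / P) + b % P) := by
              rw [Ordinal.div_add_mod, Ordinal.div_add_mod]
          _ = (P * (a / P) ♯ a % P) ♯ (P * (b / P) ♯ b % P) := by
              rw [s_ident_aux hPne hp _ _ hra, s_ident_aux hPne hp _ _ hrb]
          _ = (P * (a / P) ♯ P * (b / P)) ♯ (a % P ♯ b % P) := nadd_swap _ _ _ _
          _ = P * ((ma : Ordinal) + (mb : ℕ)) ♯ (a % P ♯ b % P) := by
              rw [hma, hmb, fin_aux hPne hp]
          _ = P * ((ma + mb : ℕ) : Ordinal) ♯ (a % P ♯ b % P) := by push_cast; ring_nf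
          _ = P * (ma + mb : ℕ) + (a % P ♯ b % P) := by
              rw [s_ident_aux hPne hp _ _ (hp _ hra _ hrb)]
      rw [hsum]
      calc P * (ma + mb : ℕ) + (a % P ♯ b % P) < P * (ma + mb : ℕ) + P :=
            add_lt_add_right (hp _ hra _ hrb) _
        _ = P * ((ma + mb : ℕ) + 1) := by rw [mul_add_one]
        _ < P * omega0 := by
            apply mul_lt_mul_of_pos_left _ (opow_pos ε omega0_pos)
            exact_mod_cast nat_lt_omega0 (ma + mb + 1)
    · -- limit case
      obtain ⟨γa, hγa, ha'⟩ := (Ordinal.lt_opow_of_isSuccLimit omega0_ne_zero hγ).1 ha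
      obtain ⟨γb, hγb, hb'⟩ := (Ordinal.lt_opow_of_isSuccLimit omega0_ne_zero hγ).1 hb
      have hm : max γa γb < γ := max_lt hγa hγb
      have := IH _ hm a (ha'.trans_le (opow_le_opow_right omega0_pos (le_max_left _ _)))
        b (hb'.trans_le (opow_le_opow_right omega0_pos (le_max_right _ _)))
      exact this.trans_le (opow_le_opow_right omega0_pos hm.le)

/-- `ω^γ * q ♯ r = ω^γ * q + r` for `r < ω^γ`. -/
theorem s_ident (γ q r : Ordinal) (hr : r < omega0 ^ γ) :
    omega0 ^ γ * q ♯ r = omega0 ^ γ * q + r :=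
  s_ident_aux (opow_pos γ omega0_pos).ne' (nadd_lt_opow γ) q r hr

theorem a6 (γ q : Ordinal) : omega0 ^ γ * q ♯ omega0 ^ γ = omega0 ^ γ * (q + 1) :=
  a6_aux (opow_pos γ omega0_pos).ne' (nadd_lt_opow γ) q

theorem fin_mul (γ : Ordinal) (q : Ordinal) (n : ℕ) :
    omega0 ^ γ * q ♯ omega0 ^ γ * n = omega0 ^ γ * (q + n) :=
  fin_aux (opow_pos γ omega0_pos).ne' (nadd_lt_opow γ) q n

/-- Natural sum absorption: adding `ω^δ` on the right absorbs any `♯ w` with `w < ω^δ`. -/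
theorem nadd_lt_add_opow {w : Ordinal} (δ : Ordinal) (hw : w < omega0 ^ δ) (x : Ordinal) :
    x ♯ w < x + omega0 ^ δ := by
  have hPne : (omega0 : Ordinal) ^ δ ≠ 0 := (opow_pos δ omega0_pos).ne'
  have hmod : x % omega0 ^ δ < omega0 ^ δ := Ordinal.mod_lt x hPne
  have h1 : x ♯ w = omega0 ^ δ * (x / omega0 ^ δ) + (x % omega0 ^ δ ♯ w) := by
    calc x ♯ w = (omega0 ^ δ * (x / omega0 ^ δ) + x % omega0 ^ δ) ♯ w := by
          rw [Ordinal.div_add_mod]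
      _ = (omega0 ^ δ * (x / omega0 ^ δ) ♯ x % omega0 ^ δ) ♯ w := by
          rw [s_ident _ _ _ hmod]
      _ = omega0 ^ δ * (x / omega0 ^ δ) ♯ (x % omega0 ^ δ ♯ w) := nadd_assoc _ _ _
      _ = _ := s_ident _ _ _ (nadd_lt_opow δ _ hmod _ hw)
  have h2 : x + omega0 ^ δ = omega0 ^ δ * (x / omega0 ^ δ) + omega0 ^ δ := by
    conv_lhs => rw [← Ordinal.div_add_mod x (omega0 ^ δ)]
    rw [add_assoc, Ordinal.add_absorp hmod le_rfl]
  rw [h1, h2]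
  exact add_lt_add_right (nadd_lt_opow δ _ hmod _ hw) _

theorem natCast_eq_nadd (n : ℕ) : ((n + 1 : ℕ) : Ordinal) = (n : Ordinal) ♯ 1 := by
  rw [nadd_one]; push_cast; rw [Ordinal.add_one_eq_succ]

theorem nat_nmul_lt_opow (δ : Ordinal) {s : Ordinal} (hs : s < omega0 ^ δ) (n : ℕ) :
    (n : Ordinal) ⨳ s < omega0 ^ δ := by
  induction n with
  | zero => simpa using opow_pos δ omega0_pos
  | succ n IH =>
    rw [natCast_eq_nadd, nadd_nmul, one_nmul]
    exact nadd_lt_opow δ _ IH _ hs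

theorem nat_nmul_opow (β : Ordinal) (n : ℕ) :
    (n : Ordinal) ⨳ (omega0 ^ β) = omega0 ^ β * n := by
  induction n with
  | zero => simp
  | succ n IH =>
    rw [natCast_eq_nadd, nadd_nmul, one_nmul, IH, a6, nadd_one, ← Ordinal.add_one_eq_succ]

theorem nadd_mul_left (β : Ordinal) : ∀ x y : Ordinal,
    omega0 ^ β * x ♯ omega0 ^ β * y = omega0 ^ β * (x ♯ y) := by
  have hPne : (omega0 : Ordinal) ^ β ≠ 0 := (opow_pos β omega0_pos).ne'
  have hPpos : (0:Ordinal) < omega0 ^ β := opow_pos β omega0_pos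
  intro x
  induction x using Ordinal.induction with
  | h x IHx =>
    intro y
    induction y using Ordinal.induction with
    | h y IHy =>
      set P := (omega0 : Ordinal) ^ β with hP
      refine le_antisymm ?_ ?_
      · rw [nadd_le_iff]
        constructor
        · intro u hu
          have hq : u / P < x := (Ordinal.div_lt hPne).2 hu
          have hm : u % P < P := Ordinal.mod_lt u hPne
          calc u ♯ P * y = (P * (u / P) + u % P) ♯ P * y := by rw [Ordinal.div_add_mod]
            _ = (P * (u / P) ♯ u % P) ♯ P * y := by rw [s_ident _ _ _ hm]
            _ = (P * (u / P) ♯ P * y) ♯ u % P := by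
                rw [nadd_assoc, nadd_comm (u % P), ← nadd_assoc]
            _ = P * (u / P ♯ y) ♯ u % P := by rw [IHx _ hq]
            _ = P * (u / P ♯ y) + u % P := s_ident _ _ _ hm
            _ < P * (u / P ♯ y) + P := add_lt_add_right hm _
            _ = P * (u / P ♯ y + 1) := by rw [mul_add_one]
            _ ≤ P * (x ♯ y) := by
                apply mul_le_mul_right
                rw [Ordinal.add_one_eq_succ, Order.succ_le_iff]
                exact nadd_lt_nadd_right hq y
        · intro w hw
          have hq : w / P < y := (Ordinal.div_lt hPne).2 hw
          have hm : w % P < P := Ordinal.mod_lt w hPne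
          calc P * x ♯ w = P * x ♯ (P * (w / P) + w % P) := by rw [Ordinal.div_add_mod]
            _ = P * x ♯ (P * (w / P) ♯ w % P) := by rw [s_ident _ _ _ hm]
            _ = (P * x ♯ P * (w / P)) ♯ w % P := (nadd_assoc _ _ _).symm
            _ = P * (x ♯ w / P) ♯ w % P := by rw [IHy _ hq]
            _ = P * (x ♯ w / P) + w % P := s_ident _ _ _ hm
            _ < P * (x ♯ w / P) + P := add_lt_add_right hm _
            _ = P * (x ♯ w / P + 1) := by rw [mul_add_one]
            _ ≤ P * (x ♯ y) := by
                apply mul_le_mul_right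
                rw [Ordinal.add_one_eq_succ, Order.succ_le_iff]
                exact nadd_lt_nadd_left hq x
      · apply le_of_forall_lt
        intro u hu
        have hc : u / P < x ♯ y := (Ordinal.div_lt hPne).2 hu
        have hm : u % P < P := Ordinal.mod_lt u hPne
        have hud := Ordinal.div_add_mod u P
        rcases lt_nadd_iff.1 hc with ⟨x', hx', hle⟩ | ⟨y', hy', hle⟩
        · have : u ≤ P * (x' ♯ y) + u % P := by
            conv_lhs => rw [← hud]
            exact add_le_add_left (mul_le_mul_right hle P) _
          refine this.trans_lt ?_
          calc P * (x' ♯ y) + u % P = P * (x' ♯ y) ♯ u % P := (s_ident _ _ _ hm).symm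
            _ = (P * x' ♯ P * y) ♯ u % P := by rw [IHx _ hx']
            _ = (P * x' ♯ u % P) ♯ P * y := by
                rw [nadd_assoc, nadd_comm (P*y), ← nadd_assoc]
            _ = (P * x' + u % P) ♯ P * y := by rw [s_ident _ _ _ hm]
            _ < P * x ♯ P * y := by
                apply nadd_lt_nadd_right
                calc P * x' + u % P < P * x' + P := add_lt_add_right hm _
                  _ = P * (x' + 1) := by rw [mul_add_one]
                  _ ≤ P * x := by
                      apply mul_le_mul_right
                      rw [Ordinal.add_one_eq_succ, Order.succ_le_iff]; exact hx'
        · have : u ≤ P * (x ♯ y') + u % P := by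
            conv_lhs => rw [← hud]
            exact add_le_add_left (mul_le_mul_right hle P) _
          refine this.trans_lt ?_
          calc P * (x ♯ y') + u % P = P * (x ♯ y') ♯ u % P := (s_ident _ _ _ hm).symm
            _ = (P * x ♯ P * y') ♯ u % P := by rw [IHy _ hy']
            _ = P * x ♯ (P * y' ♯ u % P) := nadd_assoc _ _ _
            _ = P * x ♯ (P * y' + u % P) := by rw [s_ident _ _ _ hm]
            _ < P * x ♯ P * y := by
                apply nadd_lt_nadd_left
                calc P * y' + u % P < P * y' + P := add_lt_add_right hm _
                  _ = P * (y' + 1) := by rw [mul_add_one]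
                  _ ≤ P * y := by
                      apply mul_le_mul_right
                      rw [Ordinal.add_one_eq_succ, Order.succ_le_iff]; exact hy'

theorem nmul_mul_opow (β q : Ordinal) (m : ℕ) :
    (m : Ordinal) ⨳ (omega0 ^ β * q) = omega0 ^ β * ((m : Ordinal) ⨳ q) := by
  induction m with
  | zero => simp
  | succ m IH =>
    rw [natCast_eq_nadd, nadd_nmul, nadd_nmul, one_nmul, one_nmul, IH, nadd_mul_left]

theorem claimM (β c : Ordinal) (n : ℕ) :
    (n : Ordinal) ⨳ (omega0 ^ β) ♯ ((n + 1 : ℕ) : Ordinal) ⨳ c ≤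
      ((n + 1 : ℕ) : Ordinal) ⨳ (c + omega0 ^ β) := by
  have hPne : (omega0 : Ordinal) ^ β ≠ 0 := (opow_pos β omega0_pos).ne'
  set P := (omega0 : Ordinal) ^ β with hP
  have hm : c % P < P := Ordinal.mod_lt c hPne
  have hc : c = P * (c / P) ♯ c % P := by
    rw [s_ident _ _ _ hm, Ordinal.div_add_mod]
  have hcP : c + P = P * (c / P + 1) := by
    conv_lhs => rw [← Ordinal.div_add_mod c P]
    rw [add_assoc, Ordinal.add_absorp hm le_rfl, mul_add_one]
  rw [hcP, nmul_mul_opow]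
  conv_lhs => rw [hc]
  rw [nmul_nadd, nmul_mul_opow]
  have h1 : (c / P + 1) = (c / P) ♯ 1 := by rw [nadd_one, Ordinal.add_one_eq_succ]
  rw [h1, nmul_nadd, nmul_one, ← nadd_mul_left]
  -- goal: ↑n⨳P ♯ (P*(↑(n+1)⨳(c/P)) ♯ ↑(n+1)⨳(c%P)) ≤ P*(↑(n+1)⨳(c/P)) ♯ P*↑(n+1)
  have h2 : (n : Ordinal) ⨳ P ♯ ((n + 1 : ℕ) : Ordinal) ⨳ (c % P) ≤ P * ((n+1 : ℕ) : Ordinal) := by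
    rw [nat_nmul_opow]
    have h3 : ((n + 1 : ℕ) : Ordinal) ⨳ (c % P) < P := nat_nmul_lt_opow β hm (n+1)
    calc P * (n : Ordinal) ♯ ((n + 1 : ℕ) : Ordinal) ⨳ (c % P)
        = P * (n : Ordinal) + ((n + 1 : ℕ) : Ordinal) ⨳ (c % P) := s_ident _ _ _ h3
      _ ≤ P * (n : Ordinal) + P := (add_lt_add_right h3 _).le
      _ = P * ((n : Ordinal) + 1) := by rw [mul_add_one]
      _ = P * ((n + 1 : ℕ) : Ordinal) := by push_cast; ring_nf
  calc (n : Ordinal) ⨳ P ♯ (P * (((n+1:ℕ):Ordinal) ⨳ (c / P)) ♯ ((n+1:ℕ):Ordinal) ⨳ (c % P))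
      = P * (((n+1:ℕ):Ordinal) ⨳ (c / P)) ♯
          ((n : Ordinal) ⨳ P ♯ ((n+1:ℕ):Ordinal) ⨳ (c % P)) := by
        rw [← nadd_assoc, nadd_comm ((n : Ordinal) ⨳ P), nadd_assoc]
    _ ≤ P * (((n+1:ℕ):Ordinal) ⨳ (c / P)) ♯ P * ((n+1:ℕ):Ordinal) := nadd_le_nadd_left h2 _

theorem wd (c β : Ordinal) :
    omega0 ⨳ c + omega0 ^ (β + 1) ≤ omega0 ⨳ (c + omega0 ^ β) := by
  have hPpos : (0:Ordinal) < omega0 ^ β := opow_pos β omega0_pos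
  rw [Ordinal.add_one_eq_succ, opow_succ]
  have hlim : Order.IsSuccLimit (omega0 ^ β * omega0) := isSuccLimit_mul_right hPpos isSuccLimit_omega0
  apply Ordinal.add_le_iff_of_isSuccLimit hlim |>.2
  intro b' hb'
  obtain ⟨n', hn', hb2⟩ := (Ordinal.lt_mul_iff_of_isSuccLimit isSuccLimit_omega0).1 hb'
  obtain ⟨n, rfl⟩ := Ordinal.lt_omega0.1 hn'
  have core : omega0 ⨳ c + omega0 ^ β * n < omega0 ⨳ (c + omega0 ^ β) := by
    have h0 : omega0 ⨳ c + omega0 ^ β * n ≤ omega0 ⨳ c ♯ (n : Ordinal) ⨳ (omega0 ^ β) := by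
      rw [nat_nmul_opow]; exact add_le_nadd _ _
    refine h0.trans_lt ?_
    rw [lt_nmul_iff]
    refine ⟨((n+1:ℕ):Ordinal), nat_lt_omega0 (n+1), c, lt_add_of_pos_right c hPpos, ?_⟩
    calc omega0 ⨳ c ♯ (n : Ordinal) ⨳ (omega0 ^ β) ♯ ((n+1:ℕ):Ordinal) ⨳ c
        = omega0 ⨳ c ♯ ((n : Ordinal) ⨳ (omega0 ^ β) ♯ ((n+1:ℕ):Ordinal) ⨳ c) :=
          nadd_assoc _ _ _
      _ ≤ omega0 ⨳ c ♯ ((n+1:ℕ):Ordinal) ⨳ (c + omega0 ^ β) :=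
          nadd_le_nadd_left (claimM β c n) _
      _ = ((n+1:ℕ):Ordinal) ⨳ (c + omega0 ^ β) ♯ omega0 ⨳ c := nadd_comm _ _
  exact (add_le_add_right hb2.le _).trans core.le

/-- The key inequality. -/
theorem key {g' s : Ordinal} (hs : s ≠ 0) (D : ℕ) :
    omega0 ⨳ g' ♯ (D : Ordinal) ⨳ s < omega0 ⨳ (g' + s) := by
  set β := Ordinal.log omega0 s with hβ
  have h1 : omega0 ^ β ≤ s := Ordinal.opow_log_le_self omega0 hs
  have h2 : s < omega0 ^ (β + 1) := by
    rw [Ordinal.add_one_eq_succ]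
    exact Ordinal.lt_opow_succ_log_self one_lt_omega0 s
  have h3 : (D : Ordinal) ⨳ s < omega0 ^ (β + 1) := nat_nmul_lt_opow _ h2 D
  calc omega0 ⨳ g' ♯ (D : Ordinal) ⨳ s < omega0 ⨳ g' + omega0 ^ (β + 1) :=
        nadd_lt_add_opow _ h3 _
    _ ≤ omega0 ⨳ (g' + omega0 ^ β) := wd g' β
    _ ≤ omega0 ⨳ (g' + s) := nmul_le_nmul_left (add_le_add_right h1 g') _

/-- From witnesses below `s`, conclude `g + s ≤ x`. -/
theorem ord_add_le {g s x : Ordinal} (h0 : g ≤ x) (h : ∀ s' < s, g + s' + 1 ≤ x) :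
    g + s ≤ x := by
  rcases eq_or_ne s 0 with rfl | hs
  · simpa using h0
  · apply le_of_forall_lt
    intro c hc
    obtain ⟨d, hd, hcd⟩ := (Ordinal.lt_add_iff hs).1 hc
    exact hcd.trans_lt ((lt_add_one _).trans_le (h d hd))


end HBTArith

namespace HBTGame

variable {A M : Type*} [Ring A] [AddCommGroup M] [Module A M]

/-- Span of (the set of elements of) a list. -/
abbrev lspan (A : Type*) {M : Type*} [Ring A] [AddCommGroup M] [Module A M]
    (l : List M) : Submodule A M := Submodule.span A {y | y ∈ l}

theorem lspan_append (l l' : List M) :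
    lspan A (l ++ l') = lspan A l ⊔ lspan A l' := by
  have h : {y : M | y ∈ l ++ l'} = {y | y ∈ l} ∪ {y | y ∈ l'} := by
    ext x
    simp only [Set.mem_setOf_eq, List.mem_append, Set.mem_union]
  rw [lspan, h, Submodule.span_union]

theorem lspan_singleton (x : M) : lspan A [x] = Submodule.span A {x} := by
  have h : {y : M | y ∈ [x]} = ({x} : Set M) := by
    ext y
    simp only [Set.mem_setOf_eq, List.mem_singleton, Set.mem_singleton_iff]
  rw [lspan, h]

theorem lspan_concat (l : List M) (x : M) :
    lspan A (l ++ [x]) = lspan A l ⊔ Submodule.span A {x} := by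
  rw [lspan_append, lspan_singleton]

theorem goodList_iff (σ : List M) (x : M) :
    GoodList A (σ ++ [x]) ↔ x ∈ lspan A σ := by
  constructor
  · rintro ⟨l, y, heq, hy⟩
    have h := congrArg List.reverse heq
    simp only [List.reverse_append, List.reverse_singleton, List.singleton_append] at h
    obtain ⟨rfl, h2⟩ := List.cons.inj h
    have hσ : σ = l := by simpa using congrArg List.reverse h2
    subst hσ
    exact hy
  · intro hx
    exact ⟨σ, x, rfl, hx⟩

/-- The relativized game: positions are base lists `β`; a legal move is an element of
`(N ⊔ span β) \ span β`. `RelGood γ β N` says the game from `β` has rank at most `γ`. -/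
def RelGood (A : Type*) {M : Type*} [Ring A] [AddCommGroup M] [Module A M]
    (γ : Ordinal.{u}) (β : List M) (N : Submodule A M) : Prop :=
  ∀ y : M, y ∈ N ⊔ lspan A β → y ∉ lspan A β →
    ∃ (γ' : Ordinal.{u}) (_ : γ' < γ), RelGood A γ' (β ++ [y]) N
termination_by γ

theorem RelGood_def (A : Type*) {M : Type*} [Ring A] [AddCommGroup M] [Module A M]
    (γ : Ordinal.{u}) (β : List M) (N : Submodule A M) :
    RelGood A γ β N ↔ ∀ y : M, y ∈ N ⊔ lspan A β → y ∉ lspan A β →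
      ∃ (γ' : Ordinal.{u}) (_ : γ' < γ), RelGood A γ' (β ++ [y]) N := by
  rw [RelGood]

theorem relGood_mono {γ γ' : Ordinal} (h : γ ≤ γ') {β : List M} {N : Submodule A M}
    (hg : RelGood A γ β N) : RelGood A γ' β N := by
  rw [RelGood] at hg ⊢
  intro y h1 h2
  obtain ⟨δ, hδ, hr⟩ := hg y h1 h2
  exact ⟨δ, hδ.trans_le h, hr⟩

theorem alphaGood_iff_relGood (γ : Ordinal) (σ : List M) :
    AlphaGood A γ σ ↔ RelGood A γ σ ⊤ := by
  induction γ using Ordinal.induction generalizing σ with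
  | h γ IH =>
    rw [AlphaGood, RelGood]
    constructor
    · intro h y _ hy
      rcases h y with hg | ⟨δ, hδ, hr⟩
      · exact absurd ((goodList_iff σ y).1 hg) hy
      · exact ⟨δ, hδ, (IH δ hδ _).1 hr⟩
    · intro h x
      by_cases hx : x ∈ lspan A σ
      · exact Or.inl ((goodList_iff σ x).2 hx)
      · obtain ⟨δ, hδ, hr⟩ := h x (by simp) hx
        exact Or.inr ⟨δ, hδ, (IH δ hδ _).2 hr⟩

/-- The fundamental transfer lemma between relativized games. -/
theorem relGood_trans : ∀ γ : Ordinal, ∀ (β β' : List M) (y : M) (N N' : Submodule A M),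
    lspan A β ⊔ Submodule.span A {y} ≤ lspan A β' →
    N' ⊔ lspan A β' ≤ N ⊔ lspan A β ⊔ Submodule.span A {y} →
    RelGood A γ β N → RelGood A γ β' N' := by
  intro γ
  induction γ using Ordinal.induction with
  | h γ IH =>
    intro β β' y N N' h1 h2 hg
    rw [RelGood]
    intro z hz1 hz2
    have hz3 : z ∈ N ⊔ lspan A β ⊔ Submodule.span A {y} := h2 (by exact hz1)
    rw [Submodule.mem_sup] at hz3
    obtain ⟨w, hw, m, hm, hwm⟩ := hz3
    rw [Submodule.mem_span_singleton] at hm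
    obtain ⟨a, rfl⟩ := hm
    have hwn : w ∉ lspan A β := by
      intro hmem
      apply hz2
      have hmemy : w + a • y ∈ lspan A β ⊔ Submodule.span A {y} :=
        Submodule.add_mem_sup hmem (Submodule.smul_mem _ a (Submodule.mem_span_singleton_self y))
      exact hwm ▸ h1 hmemy
    rw [RelGood] at hg
    obtain ⟨γ', hγ', hr⟩ := hg w hw hwn
    refine ⟨γ', hγ', IH γ' hγ' (β ++ [w]) (β' ++ [z]) y N N' ?_ ?_ hr⟩
    · -- lspan (β++[w]) ⊔ span y ≤ lspan (β'++[z])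
      rw [lspan_concat, lspan_concat]
      have hyz : Submodule.span A {y} ≤ lspan A β' ⊔ Submodule.span A {z} :=
        le_trans (le_trans le_sup_right h1) le_sup_left
      refine sup_le (sup_le ?_ ?_) hyz
      · exact le_trans (le_trans le_sup_left h1) le_sup_left
      · -- span {w} ≤ ...
        rw [Submodule.span_singleton_le_iff_mem]
        have hz : z ∈ lspan A β' ⊔ Submodule.span A {z} :=
          Submodule.mem_sup_right (Submodule.mem_span_singleton_self z)
        have hay : a • y ∈ lspan A β' ⊔ Submodule.span A {z} :=
          Submodule.mem_sup_left (h1 (Submodule.mem_sup_right (Submodule.smul_mem _ a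
            (Submodule.mem_span_singleton_self y))))
        have : z - a • y ∈ lspan A β' ⊔ Submodule.span A {z} := sub_mem hz hay
        simpa [← hwm] using this
    · -- N' ⊔ lspan (β'++[z]) ≤ N ⊔ lspan (β++[w]) ⊔ span y
      rw [lspan_concat, lspan_concat]
      have hN' : N' ≤ N ⊔ (lspan A β ⊔ Submodule.span A {w}) ⊔ Submodule.span A {y} := by
        refine le_trans (le_trans le_sup_left h2) ?_
        refine sup_le (sup_le ?_ ?_) le_sup_right
        · exact le_trans le_sup_left le_sup_left
        · exact le_trans (le_trans le_sup_left le_sup_right) le_sup_left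
      have hβ' : lspan A β' ≤ N ⊔ (lspan A β ⊔ Submodule.span A {w}) ⊔ Submodule.span A {y} := by
        refine le_trans (le_trans le_sup_right h2) ?_
        refine sup_le (sup_le ?_ ?_) le_sup_right
        · exact le_trans le_sup_left le_sup_left
        · exact le_trans (le_trans le_sup_left le_sup_right) le_sup_left
      have hz : Submodule.span A {z} ≤
          N ⊔ (lspan A β ⊔ Submodule.span A {w}) ⊔ Submodule.span A {y} := by
        rw [Submodule.span_singleton_le_iff_mem, ← hwm]
        have hw2 : w ∈ N ⊔ (lspan A β ⊔ Submodule.span A {w}) ⊔ Submodule.span A {y} :=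
          Submodule.mem_sup_left (Submodule.mem_sup_right (Submodule.mem_sup_right
            (Submodule.mem_span_singleton_self w)))
        have hy2 : a • y ∈ N ⊔ (lspan A β ⊔ Submodule.span A {w}) ⊔ Submodule.span A {y} :=
          Submodule.mem_sup_right (Submodule.smul_mem _ a (Submodule.mem_span_singleton_self y))
        exact add_mem hw2 hy2
      exact sup_le hN' (sup_le hβ' hz)



/-- Inserting an arbitrary element into the base does not increase the game rank. -/
theorem relGood_insert {γ : Ordinal.{u}} {β : List M} {N : Submodule A M} (y : M)
    (hg : RelGood A γ β N) : RelGood A γ (β ++ [y]) N := by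
  refine relGood_trans γ β (β ++ [y]) y N N ?_ ?_ hg
  · rw [lspan_concat]
  · rw [lspan_concat, sup_assoc]

/-- Weakening the ambient submodule. -/
theorem relGood_shrink {γ : Ordinal.{u}} {β : List M} {N N' : Submodule A M} (h : N' ≤ N)
    (hg : RelGood A γ β N) : RelGood A γ β N' := by
  refine relGood_trans γ β β 0 N N' ?_ ?_ hg
  · simp [Submodule.span_zero_singleton]
  · refine sup_le ?_ ?_
    · exact h.trans (le_sup_left.trans le_sup_left)
    · exact le_sup_right.trans le_sup_left

theorem relGood_zero {β : List M} {N : Submodule A M} (h : N ≤ lspan A β) :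
    RelGood A 0 β N := by
  rw [RelGood_def]
  intro y h1 h2
  rw [sup_eq_right.2 h] at h1
  exact absurd h1 h2

/-- Least rank of the relativized game. -/
noncomputable def rk (A : Type*) {M : Type*} [Ring A] [AddCommGroup M] [Module A M]
    (β : List M) (N : Submodule A M) : Ordinal.{u} :=
  sInf {γ : Ordinal.{u} | RelGood A γ β N}

theorem relGood_rk {β : List M} {N : Submodule A M} (h : ∃ γ : Ordinal.{u}, RelGood A γ β N) :
    RelGood A (rk.{u} A β N) β N :=
  csInf_mem h

theorem rk_le {γ : Ordinal.{u}} {β : List M} {N : Submodule A M} (h : RelGood A γ β N) :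
    rk.{u} A β N ≤ γ :=
  csInf_le' h

theorem rk_move {β : List M} {N : Submodule A M} (hex : ∃ γ : Ordinal.{u}, RelGood A γ β N)
    {y : M} (h1 : y ∈ N ⊔ lspan A β) (h2 : y ∉ lspan A β) :
    rk.{u} A (β ++ [y]) N < rk.{u} A β N ∧ ∃ γ : Ordinal.{u}, RelGood A γ (β ++ [y]) N := by
  have := (RelGood_def A (rk.{u} A β N) β N).1 (relGood_rk hex) y h1 h2
  obtain ⟨γ', hγ', hr⟩ := this
  exact ⟨(rk_le hr).trans_lt hγ', ⟨γ', hr⟩⟩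

/-- The coupling lemma: the rank of the full game at `lam` is at least the rank after
appending `z` plus (ordinal sum) the rank of the cyclic game of `z` over `lam`. -/
theorem cpl_aux : ∀ s : Ordinal.{u}, ∀ (lam : List M) (z : M) (μ : List M),
    rk.{u} A μ (lspan A lam ⊔ Submodule.span A {z}) = s →
    (∃ γ : Ordinal.{u}, RelGood A γ μ (lspan A lam ⊔ Submodule.span A {z})) →
    (∃ γ : Ordinal.{u}, RelGood A γ μ ⊤) →
    lspan A lam ≤ lspan A μ →
    lspan A μ ≤ lspan A lam ⊔ Submodule.span A {z} →
    rk.{u} A (lam ++ [z]) ⊤ + rk.{u} A μ (lspan A lam ⊔ Submodule.span A {z}) ≤ rk.{u} A μ ⊤ := by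
  intro s
  induction s using Ordinal.induction with
  | h s IH =>
    intro lam z μ hs hexN hexT hsub1 hsub2
    set Nz := lspan A lam ⊔ Submodule.span A {z} with hNz
    have h0 : rk.{u} A (lam ++ [z]) ⊤ ≤ rk.{u} A μ ⊤ := by
      apply rk_le
      refine relGood_trans _ μ (lam ++ [z]) z ⊤ ⊤ ?_ ?_ (relGood_rk hexT)
      · rw [lspan_concat]
        exact sup_le (le_trans hsub2 (by rw [hNz])) le_sup_right
      · simp
    refine HBTArith.ord_add_le (s := rk.{u} A μ Nz) h0 ?_
    intro s' hs'
    have hy : ∃ y, (y ∈ Nz ⊔ lspan A μ) ∧ (y ∉ lspan A μ) ∧ s' ≤ rk.{u} A (μ ++ [y]) Nz := by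
      by_contra hcon
      push_neg at hcon
      have hgood : RelGood A s' μ Nz := by
        rw [RelGood_def]
        intro y h1 h2
        exact ⟨rk.{u} A (μ ++ [y]) Nz, hcon y h1 h2, relGood_rk (rk_move hexN h1 h2).2⟩
      exact absurd (rk_le hgood) (not_le.2 hs')
    obtain ⟨y, hy1, hy2, hrk⟩ := hy
    have hmv := rk_move hexN hy1 hy2
    have hmvT := rk_move hexT (by simp : y ∈ (⊤ : Submodule A M) ⊔ lspan A μ) hy2
    have hchild := IH (rk.{u} A (μ ++ [y]) Nz) (hs ▸ hmv.1) lam z (μ ++ [y]) rfl hmv.2 hmvT.2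
        (le_trans hsub1 (by rw [lspan_concat]; exact le_sup_left))
        (by rw [lspan_concat]
            refine sup_le hsub2 ?_
            rw [Submodule.span_singleton_le_iff_mem]
            have hcoll : Nz ⊔ lspan A μ = Nz := sup_eq_left.2 hsub2
            have := hy1; rw [hcoll] at this; exact this)
    calc rk.{u} A (lam ++ [z]) ⊤ + s' + 1
        ≤ rk.{u} A (lam ++ [z]) ⊤ + rk.{u} A (μ ++ [y]) Nz + 1 :=
          add_le_add_left (add_le_add_right hrk _) 1
      _ ≤ rk.{u} A (μ ++ [y]) ⊤ + 1 := add_le_add_left hchild 1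
      _ ≤ rk.{u} A μ ⊤ := by
          rw [Ordinal.add_one_eq_succ, Order.succ_le_iff]; exact hmvT.1

/-- The coupling inequality at the root. -/
theorem cpl (lam : List M) (z : M) (hexT : ∃ γ : Ordinal.{u}, RelGood A γ lam ⊤) :
    rk.{u} A (lam ++ [z]) ⊤ + rk.{u} A lam (lspan A lam ⊔ Submodule.span A {z}) ≤
      rk.{u} A lam ⊤ := by
  refine cpl_aux _ lam z lam rfl ?_ hexT le_rfl le_sup_left
  obtain ⟨γ, hγ⟩ := hexT
  exact ⟨γ, relGood_shrink le_top hγ⟩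

/-- Ambient-growth lemma: adding one generator `c` to the ambient submodule increases
the rank of a relativized game by at most the rank of the cyclic game of `c`. -/
theorem relGood_ambient : ∀ s r : Ordinal.{u}, ∀ (β υ lam : List M) (c : M) (N : Submodule A M),
    RelGood A r β N → RelGood A s (lam ++ υ) (N ⊔ Submodule.span A {c}) →
    lspan A lam ≤ N →
    lspan A β ≤ N ⊔ lspan A υ →
    lspan A υ ≤ N ⊔ lspan A β →
    RelGood A (r ♯ s) β (N ⊔ Submodule.span A {c}) := by
  intro s
  induction s using Ordinal.induction with
  | h s IHs =>
    intro r
    induction r using Ordinal.induction with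
    | h r IHr =>
      intro β υ lam c N hr hs hlam hβυ hυβ
      rw [RelGood_def]
      intro y h1 h2
      by_cases hcase : y ∈ N ⊔ lspan A β
      · -- a move of the `r`-game
        obtain ⟨r', hlt, hrg⟩ := (RelGood_def A r β N).1 hr y hcase h2
        refine ⟨r' ♯ s, nadd_lt_nadd_right hlt s, ?_⟩
        have hymem : y ∈ N ⊔ lspan A υ := (sup_le le_sup_left hβυ) hcase
        refine IHr r' hlt (β ++ [y]) υ lam c N hrg hs hlam ?_ ?_
        · rw [lspan_concat]
          exact sup_le hβυ ((Submodule.span_singleton_le_iff_mem y _).2 hymem)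
        · refine le_trans hυβ (sup_le_sup_left ?_ N)
          rw [lspan_concat]; exact le_sup_left
      · -- a move of the cyclic game
        have e1 : lspan A υ ≤ (N ⊔ Submodule.span A {c}) ⊔ lspan A (lam ++ υ) := by
          refine le_trans ?_ le_sup_right
          rw [lspan_append]; exact le_sup_right
        have hspanβ : lspan A β ≤ (N ⊔ Submodule.span A {c}) ⊔ lspan A (lam ++ υ) :=
          le_trans hβυ (sup_le (le_trans le_sup_left le_sup_left) e1)
        have hy1' : y ∈ (N ⊔ Submodule.span A {c}) ⊔ lspan A (lam ++ υ) :=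
          (sup_le le_sup_left hspanβ) h1
        have e3 : lspan A (lam ++ υ) ≤ N ⊔ lspan A β := by
          rw [lspan_append]; exact sup_le (le_trans hlam le_sup_left) hυβ
        have hy2' : y ∉ lspan A (lam ++ υ) := fun hmem => hcase (e3 hmem)
        obtain ⟨s', hlt, hsg⟩ := (RelGood_def A s (lam ++ υ) _).1 hs y hy1' hy2'
        refine ⟨r ♯ s', nadd_lt_nadd_left hlt r, ?_⟩
        have hsg' : RelGood A s' (lam ++ (υ ++ [y])) (N ⊔ Submodule.span A {c}) := by
          rwa [← List.append_assoc]
        have hymem2 : y ∈ lspan A (υ ++ [y]) := by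
          rw [lspan_concat]
          exact Submodule.mem_sup_right (Submodule.mem_span_singleton_self y)
        have hymem3 : y ∈ lspan A (β ++ [y]) := by
          rw [lspan_concat]
          exact Submodule.mem_sup_right (Submodule.mem_span_singleton_self y)
        refine IHs s' hlt r (β ++ [y]) (υ ++ [y]) lam c N (relGood_insert y hr) hsg' hlam ?_ ?_
        · rw [lspan_concat β y]
          refine sup_le (le_trans hβυ (sup_le_sup_left ?_ N))
            ((Submodule.span_singleton_le_iff_mem y _).2 (Submodule.mem_sup_right hymem2))
          rw [lspan_concat]; exact le_sup_left
        · rw [lspan_concat υ y]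
          refine sup_le (le_trans hυβ (sup_le_sup_left ?_ N))
            ((Submodule.span_singleton_le_iff_mem y _).2 (Submodule.mem_sup_right hymem3))
          rw [lspan_concat]; exact le_sup_left


end HBTGame

namespace HBTPoly
open HBTGame
variable {A M : Type*} [Ring A] [AddCommGroup M] [Module A M]

theorem smul_eq_eval₂ (p : Polynomial A) (f : ℕ →₀ M) :
    p • f = Polynomial.eval₂ (coeffMulHom A M) (shiftEnd M) p f := rfl

theorem C_smul_apply (a : A) (f : ℕ →₀ M) (n : ℕ) :
    ((Polynomial.C a) • f) n = a • f n := by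
  rw [smul_eq_eval₂, Polynomial.eval₂_C]
  rfl

theorem X_smul_apply (f : ℕ →₀ M) (n : ℕ) :
    ((Polynomial.X : Polynomial A) • f) (n + 1) = f n := by
  rw [smul_eq_eval₂, Polynomial.eval₂_X]
  show (Finsupp.mapDomain (· + 1) f) (n + 1) = f n
  exact Finsupp.mapDomain_apply (add_left_injective 1) f n

theorem X_smul_apply_zero (f : ℕ →₀ M) :
    ((Polynomial.X : Polynomial A) • f) 0 = 0 := by
  rw [smul_eq_eval₂, Polynomial.eval₂_X]
  show (Finsupp.mapDomain (· + 1) f) 0 = 0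
  apply Finsupp.mapDomain_notin_range
  rintro ⟨m, hm⟩
  exact Nat.succ_ne_zero m hm

/-- `f` has degree `< d`. -/
def DegLt (f : ℕ →₀ M) (d : ℕ) : Prop := ∀ k, d ≤ k → f k = 0

/-- The submodule of `M` of coefficients in degree `e` of elements of `I` of degree `≤ e`. -/
def Lsub (I : Submodule (Polynomial A) (ℕ →₀ M)) (e : ℕ) : Submodule A M where
  carrier := {c | ∃ f ∈ I, DegLt f (e + 1) ∧ f e = c}
  zero_mem' := ⟨0, zero_mem I, fun k _ => rfl, rfl⟩
  add_mem' := by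
    rintro c d ⟨f, hf, hfd, rfl⟩ ⟨g, hg, hgd, rfl⟩
    exact ⟨f + g, add_mem hf hg, fun k hk => by
      rw [Finsupp.add_apply, hfd k hk, hgd k hk, add_zero], Finsupp.add_apply f g e⟩
  smul_mem' := by
    rintro a c ⟨f, hf, hfd, rfl⟩
    refine ⟨(Polynomial.C a) • f, Submodule.smul_mem I _ hf, fun k hk => ?_, C_smul_apply a f e⟩
    rw [C_smul_apply, hfd k hk, smul_zero]

theorem Lsub_mono_I {I J : Submodule (Polynomial A) (ℕ →₀ M)} (h : I ≤ J) (e : ℕ) :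
    Lsub I e ≤ Lsub J e := by
  rintro c ⟨f, hf, hfd, rfl⟩
  exact ⟨f, h hf, hfd, rfl⟩

theorem Lsub_mono_e (I : Submodule (Polynomial A) (ℕ →₀ M)) {e e' : ℕ} (h : e ≤ e') :
    Lsub I e ≤ Lsub I e' := by
  induction e' with
  | zero => rw [Nat.le_zero.1 h]
  | succ e' IH =>
    rcases Nat.lt_or_ge e (e' + 1) with hlt | hge
    · refine le_trans (IH (Nat.lt_succ_iff.1 hlt)) ?_
      rintro c ⟨f, hf, hfd, rfl⟩
      refine ⟨(Polynomial.X : Polynomial A) • f, Submodule.smul_mem I _ hf, ?_, X_smul_apply f e'⟩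
      intro k hk
      match k, hk with
      | (k + 1), hk => rw [X_smul_apply]; exact hfd k (by omega)
    · have : e = e' + 1 := le_antisymm h hge
      rw [this]

theorem reduction (I : Submodule (Polynomial A) (ℕ →₀ M)) :
    ∀ (d : ℕ) (p : ℕ →₀ M), p ∉ I → DegLt p d →
    ∃ (e : ℕ) (c : M), c ∉ Lsub I e ∧
      c ∈ Lsub (I ⊔ Submodule.span (Polynomial A) {p}) e := by
  intro d
  induction d with
  | zero =>
    intro p hp hd
    exact absurd (by ext k; exact hd k (Nat.zero_le k) : p = 0) (by rintro rfl; exact hp (zero_mem I))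
  | succ e IH =>
    intro p hp hd
    by_cases hc : p e ∈ Lsub I e
    · obtain ⟨f, hfI, hfd, hfe⟩ := hc
      have hp' : p - f ∉ I := fun hmem => hp (by
        have := add_mem hmem hfI
        rwa [sub_add_cancel] at this)
      have hd' : DegLt (p - f) e := by
        intro k hk
        rcases Nat.eq_or_lt_of_le hk with rfl | hlt
        · rw [Finsupp.sub_apply, hfe]; exact sub_self _
        · rw [Finsupp.sub_apply, hd k hlt, hfd k hlt]; simp
      obtain ⟨e₂, c, hc1, hc2⟩ := IH (p - f) hp' hd'
      refine ⟨e₂, c, hc1, Lsub_mono_I ?_ e₂ hc2⟩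
      refine sup_le le_sup_left ?_
      rw [Submodule.span_singleton_le_iff_mem]
      exact sub_mem (Submodule.mem_sup_right (Submodule.mem_span_singleton_self p))
        (Submodule.mem_sup_left hfI)
    · refine ⟨e, p e, hc, ⟨p, Submodule.mem_sup_right (Submodule.mem_span_singleton_self p),
        hd, rfl⟩⟩

end HBTPoly

namespace HBTD
open HBTGame HBTPoly HBTArith

variable {A M : Type*} [Ring A] [AddCommGroup M] [Module A M]

theorem lspan_nil : lspan A ([] : List M) = ⊥ := by
  have h : {y : M | y ∈ ([] : List M)} = (∅ : Set M) := by ext y; simp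
  rw [lspan, h, Submodule.span_empty]

/-- The state of the simulation. -/
structure St.{v} (A : Type*) (M : Type*) [Ring A] [AddCommGroup M] [Module A M] where
  lam : List M
  tau : ℕ → List M
  B : ℕ
  g : Ordinal.{v}
  r : ℕ → Ordinal.{v}

/-- The invariant tying a state to a list `σ` of polynomials. -/
def Inv (σ : List (ℕ →₀ M)) (st : St.{u} A M) : Prop :=
  (∀ e : ℕ, lspan A (st.tau e) ≤ Lsub (lspan (Polynomial A) σ) e) ∧
  (∀ e : ℕ, st.B ≤ e → st.tau e = st.lam) ∧
  RelGood A st.g st.lam ⊤ ∧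
  (∀ e : ℕ, RelGood A (st.r e) (st.tau e) (lspan A st.lam)) ∧
  (∀ e : ℕ, st.B ≤ e → st.r e = 0) ∧
  (∀ e : ℕ, lspan A (st.tau e) ≤ lspan A st.lam)

/-- Natural sum of the first `n` values of `f`. -/
noncomputable def nsum (f : ℕ → Ordinal.{u}) : ℕ → Ordinal.{u}
  | 0 => 0
  | n + 1 => nsum f n ♯ f n

theorem nsum_le (f g : ℕ → Ordinal.{u}) (h : ∀ i, f i ≤ g i) : ∀ n, nsum f n ≤ nsum g n
  | 0 => le_rfl
  | n + 1 => by
    rw [nsum, nsum]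
    exact (nadd_le_nadd_right (nsum_le f g h n) _).trans (nadd_le_nadd_left (h n) _)

theorem nsum_lt (f g : ℕ → Ordinal.{u}) (h : ∀ i, f i ≤ g i) {e : ℕ} (he : f e < g e) :
    ∀ n, e < n → nsum f n < nsum g n
  | 0, h0 => absurd h0 (Nat.not_lt_zero _)
  | n + 1, hn => by
    rw [nsum, nsum]
    rcases Nat.lt_succ_iff_lt_or_eq.1 hn with hlt | rfl
    · exact nadd_lt_nadd_of_lt_of_le (nsum_lt f g h he n hlt) (h n)
    · exact nadd_lt_nadd_of_le_of_lt (nsum_le f g h _) he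

theorem nsum_add_const (f g : ℕ → Ordinal.{u}) (s : Ordinal.{u}) :
    ∀ n, (∀ i, i < n → f i = g i ♯ s) → nsum f n = nsum g n ♯ (n : Ordinal) ⨳ s
  | 0, _ => by simp [nsum]
  | n + 1, h => by
    rw [nsum, nsum, nsum_add_const f g s n (fun i hi => h i (by omega)), h n (by omega),
      natCast_eq_nadd, nadd_nmul, one_nmul]
    ac_rfl

theorem nsum_zero_tail (f : ℕ → Ordinal.{u}) (m : ℕ) (hf : ∀ i, m ≤ i → f i = 0) :
    ∀ n, m ≤ n → nsum f n = nsum f m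
  | 0, h0 => by rw [Nat.le_zero.1 h0]
  | n + 1, hn => by
    rcases Nat.lt_or_ge n m with hlt | hge
    · rw [show m = n + 1 by omega]
    · rw [nsum, hf n hge, nadd_zero, nsum_zero_tail f m hf n hge]

noncomputable def meas (st : St.{u} A M) : Ordinal.{u} :=
  omega0 ⨳ st.g ♯ nsum st.r st.B

theorem event {σ : List (ℕ →₀ M)} {st : St.{u} A M} (hInv : Inv σ st) {p : ℕ →₀ M}
    (hp : p ∉ lspan (Polynomial A) σ) :
    ∃ st' : St.{u} A M, Inv (σ ++ [p]) st' ∧ meas st' < meas st := by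
  obtain ⟨I1, I2, I3, I4, I5, I6⟩ := hInv
  have hdeg : DegLt p ((p.support.sup id) + 1) := by
    intro k hk
    by_contra hne
    have hmem : k ∈ p.support := Finsupp.mem_support_iff.2 hne
    have := Finset.le_sup (f := id) hmem
    simp only [id] at this
    omega
  obtain ⟨e, c, hc1, hc2⟩ := reduction (lspan (Polynomial A) σ) _ p hp hdeg
  have hVI : lspan (Polynomial A) σ ⊔ Submodule.span (Polynomial A) {p} =
      lspan (Polynomial A) (σ ++ [p]) := (lspan_concat σ p).symm
  rw [hVI] at hc2
  have hII' : lspan (Polynomial A) σ ≤ lspan (Polynomial A) (σ ++ [p]) := by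
    rw [← hVI]; exact le_sup_left
  have hcnotτ : c ∉ lspan A (st.tau e) := fun h => hc1 (I1 e h)
  by_cases hc : c ∈ lspan A st.lam
  · -- pure-low event
    have heB : e < st.B := by
      by_contra hge
      push_neg at hge
      rw [I2 e hge] at hcnotτ
      exact hcnotτ hc
    obtain ⟨re', hre', hrg'⟩ := (RelGood_def A (st.r e) (st.tau e) (lspan A st.lam)).1 (I4 e) c
      (Submodule.mem_sup_left hc) hcnotτ
    have hlam' : lspan A (st.lam ++ [c]) = lspan A st.lam := by
      rw [lspan_concat]
      exact sup_eq_left.2 ((Submodule.span_singleton_le_iff_mem c _).2 hc)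
    refine ⟨⟨st.lam ++ [c], fun e' => if e ≤ e' then st.tau e' ++ [c] else st.tau e', st.B,
      st.g, fun e' => if e' = e then re' else st.r e'⟩, ⟨?_, ?_, ?_, ?_, ?_, ?_⟩, ?_⟩
    · -- I1
      intro e'
      dsimp only
      split
      · next hle =>
          rw [lspan_concat]
          refine sup_le ((I1 e').trans (Lsub_mono_I hII' e')) ?_
          rw [Submodule.span_singleton_le_iff_mem]
          exact Lsub_mono_e _ hle hc2
      · exact (I1 e').trans (Lsub_mono_I hII' e')
    · -- I2
      intro e' he'
      dsimp only at he' ⊢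
      rw [if_pos (le_of_lt (lt_of_lt_of_le heB he')), I2 e' he']
    · -- I3
      exact relGood_insert c I3
    · -- I4
      intro e'
      dsimp only
      rw [hlam']
      by_cases he : e' = e
      · subst he
        rw [if_pos le_rfl, if_pos rfl]
        exact hrg'
      · rw [if_neg he]
        split
        · exact relGood_insert c (I4 e')
        · exact I4 e'
    · -- I5
      intro e' he'
      dsimp only at he' ⊢
      rw [if_neg (by omega : ¬ e' = e)]
      exact I5 e' he'
    · -- I6
      intro e'
      dsimp only
      rw [hlam']
      split
      · next hle =>
          rw [lspan_concat]
          exact sup_le (I6 e') ((Submodule.span_singleton_le_iff_mem c _).2 hc)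
      · exact I6 e'
    · -- measure decreases
      unfold meas
      dsimp only
      apply nadd_lt_nadd_left
      refine nsum_lt _ _ (fun i => ?_) (e := e) ?_ _ heB
      · split
        · next hi => subst hi; exact hre'.le
        · exact le_rfl
      · rw [if_pos rfl]
        exact hre'
  · -- top event
    have hexT : ∃ γ : Ordinal.{u}, RelGood A γ st.lam ⊤ := ⟨st.g, I3⟩
    have hexN : ∃ γ : Ordinal.{u},
        RelGood A γ st.lam (lspan A st.lam ⊔ Submodule.span A {c}) :=
      ⟨st.g, relGood_shrink le_top I3⟩
    have hcT : c ∈ (⊤ : Submodule A M) ⊔ lspan A st.lam := by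
      rw [top_sup_eq]; trivial
    have hmvT := rk_move hexT hcT hc
    set g' : Ordinal.{u} := rk.{u} A (st.lam ++ [c]) ⊤ with hg'
    set s : Ordinal.{u} := rk.{u} A st.lam (lspan A st.lam ⊔ Submodule.span A {c}) with hs
    have hs0 : s ≠ 0 := by
      intro h0
      have hrg := relGood_rk hexN
      rw [← hs, h0] at hrg
      obtain ⟨γ', hγ', _⟩ := (RelGood_def A 0 st.lam _).1 hrg c
        (Submodule.mem_sup_left (Submodule.mem_sup_right (Submodule.mem_span_singleton_self c)))
        hc
      exact (not_lt_zero hγ')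
    have hcpl : g' + s ≤ st.g := (cpl st.lam c hexT).trans (rk_le I3)
    set B' : ℕ := max st.B (e + 1) with hB'
    have hKEY : omega0 ⨳ g' ♯ (B' : Ordinal) ⨳ s < omega0 ⨳ st.g :=
      (key hs0 B').trans_le (nmul_le_nmul_left hcpl _)
    have hNc : lspan A (st.lam ++ [c]) = lspan A st.lam ⊔ Submodule.span A {c} :=
      lspan_concat _ _
    have hamb : ∀ e', RelGood A (st.r e' ♯ s) (st.tau e')
        (lspan A st.lam ⊔ Submodule.span A {c}) := by
      intro e'
      refine relGood_ambient s (st.r e') (st.tau e') [] st.lam c (lspan A st.lam)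
        (I4 e') ?_ le_rfl ?_ ?_
      · rw [List.append_nil]; exact relGood_rk hexN
      · rw [lspan_nil, sup_bot_eq]; exact I6 e'
      · rw [lspan_nil]; exact bot_le
    refine ⟨⟨st.lam ++ [c], fun e' => if e ≤ e' then st.tau e' ++ [c] else st.tau e', B',
      g', fun e' => if e' < B' then st.r e' ♯ s else 0⟩, ⟨?_, ?_, ?_, ?_, ?_, ?_⟩, ?_⟩
    · -- I1
      intro e'
      dsimp only
      split
      · next hle =>
          rw [lspan_concat]
          refine sup_le ((I1 e').trans (Lsub_mono_I hII' e')) ?_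
          rw [Submodule.span_singleton_le_iff_mem]
          exact Lsub_mono_e _ hle hc2
      · exact (I1 e').trans (Lsub_mono_I hII' e')
    · -- I2
      intro e' he'
      dsimp only at he' ⊢
      have he : e ≤ e' := by omega
      have hB : st.B ≤ e' := by omega
      rw [if_pos he, I2 e' hB]
    · -- I3
      exact relGood_rk hmvT.2
    · -- I4
      intro e'
      dsimp only
      rw [hNc]
      by_cases hlt : e' < B'
      · rw [if_pos hlt]
        split
        · exact relGood_insert c (hamb e')
        · exact hamb e'
      · rw [if_neg hlt]
        push_neg at hlt
        have he : e ≤ e' := by omega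
        have hB : st.B ≤ e' := by omega
        rw [if_pos he, I2 e' hB]
        exact relGood_zero (by rw [← hNc])
    · -- I5
      intro e' he'
      dsimp only at he' ⊢
      rw [if_neg (by omega : ¬ e' < B')]
    · -- I6
      intro e'
      dsimp only
      have hlamle : lspan A st.lam ≤ lspan A (st.lam ++ [c]) := by
        rw [lspan_concat]; exact le_sup_left
      split
      · rw [lspan_concat]
        refine sup_le ((I6 e').trans hlamle) ?_
        rw [Submodule.span_singleton_le_iff_mem, lspan_concat]
        exact Submodule.mem_sup_right (Submodule.mem_span_singleton_self c)
      · exact (I6 e').trans hlamle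
    · -- measure decreases
      unfold meas
      dsimp only
      have hsum1 : nsum (fun e' => if e' < B' then st.r e' ♯ s else 0) B' =
          nsum st.r st.B ♯ (B' : Ordinal) ⨳ s := by
        rw [nsum_add_const _ st.r s B' (fun i hi => if_pos hi),
          nsum_zero_tail st.r st.B I5 B' (le_max_left _ _)]
      rw [hsum1, ← nadd_assoc, nadd_right_comm]
      exact nadd_lt_nadd_right hKEY _

theorem main : ∀ Γ : Ordinal.{u}, ∀ (σ : List (ℕ →₀ M)) (st : St.{u} A M),
    Inv σ st → meas st = Γ → AlphaGood (Polynomial A) Γ σ := by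
  intro Γ
  induction Γ using Ordinal.induction with
  | h Γ IH =>
    intro σ st hInv hm
    rw [AlphaGood]
    intro p
    by_cases hp : p ∈ lspan (Polynomial A) σ
    · exact Or.inl ((goodList_iff σ p).2 hp)
    · obtain ⟨st', hInv', hlt⟩ := event hInv hp
      rw [hm] at hlt
      exact Or.inr ⟨meas st', hlt, IH _ hlt _ st' hInv' rfl⟩

end HBTD


/-- Quantitative Hilbert basis theorem: if `M` is an `α`-Noetherian module over a
ring `A`, then the polynomial module `M[X]` is `(ω ⊗ α)`-Noetherian over `A[X]`,
where `⊗` is the Hessenberg natural product. -/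
theorem polynomialModule_nmul_noetherian (α : Ordinal)
    (h : AlphaGood A α ([] : List M)) :
    AlphaGood (Polynomial A) (Ordinal.nmul Ordinal.omega0 α)
      ([] : List (ℕ →₀ M)) := by
  have h0 : HBTGame.RelGood A α ([] : List M) ⊤ :=
    (HBTGame.alphaGood_iff_relGood α ([] : List M)).1 h
  refine HBTD.main (Ordinal.nmul Ordinal.omega0 α) ([] : List (ℕ →₀ M))
    ⟨([] : List M), fun _ => ([] : List M), 0, α, fun _ => 0⟩ ⟨?_, ?_, ?_, ?_, ?_, ?_⟩ ?_
  · intro e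
    rw [HBTD.lspan_nil]
    exact bot_le
  · intro e _
    rfl
  · exact h0
  · intro e
    exact HBTGame.relGood_zero (le_of_eq rfl)
  · intro e _
    rfl
  · intro e
    exact le_rfl
  · unfold HBTD.meas
    dsimp only
    rw [HBTD.nsum, nadd_zero]

end
end

section
/- Let α be an ordinal, M a module over a ring A, and (M_n)_{n∈ℕ} an ascending chain of submodules of M. If there exists an α-good list σ of elements of M with ⟨σ⟩ ⊆ M_0, then there exists n ∈ ℕ with M_n = M_{n+1}. In particular, every α-Noetherian module is Noetherian. -/
open Ordinal

lemma alphaGood_key {A M : Type*} [Ring A] [AddCommGroup M] [Module A M] :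
    ∀ α : Ordinal, ∀ σ : List M, AlphaGood A α σ →
      ∀ N : ℕ → Submodule A M, Monotone N → (∀ n, N n ≠ N (n + 1)) →
      Submodule.span A {x | x ∈ σ} ≤ N 0 → False := by
  intro α
  induction α using Ordinal.induction with
  | h α IH =>
    intro σ hσ N hm hne hspan
    have h01 : N 0 < N 1 := lt_of_le_of_ne (hm (by norm_num)) (hne 0)
    obtain ⟨x, hx1, hx0⟩ := SetLike.exists_of_lt h01
    rw [AlphaGood] at hσ
    rcases hσ x with hgood | ⟨β, hβ, hg⟩
    · obtain ⟨l, y, heq, hy⟩ := hgood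
      obtain ⟨h1, h2⟩ := List.append_inj' heq rfl
      obtain rfl : x = y := by simpa using h2
      exact hx0 (hspan (h1 ▸ hy))
    · refine IH β hβ (σ ++ [x]) hg (fun n => N (n + 1))
        (fun a b hab => hm (Nat.succ_le_succ hab)) (fun n => hne (n + 1)) ?_
      have hset : {y | y ∈ σ ++ [x]} = {y | y ∈ σ} ∪ {x} := by
        ext y; simp [or_comm]
      rw [hset, Submodule.span_union]
      refine sup_le (hspan.trans h01.le) ?_
      rw [Submodule.span_le, Set.singleton_subset_iff]
      exact hx1

/-- If there is an `α`-good list `σ` with `⟨σ⟩ ⊆ N 0` for an ascending chain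
`(N n)` of submodules, then the chain stalls at some step; in particular every
`α`-Noetherian module is Noetherian. -/
theorem chain_stalls_and_noetherian {A M : Type*} [Ring A] [AddCommGroup M]
    [Module A M] (α : Ordinal) :
    (∀ N : ℕ → Submodule A M, Monotone N →
      (∃ σ : List M, AlphaGood A α σ ∧ Submodule.span A {x | x ∈ σ} ≤ N 0) →
      ∃ n : ℕ, N n = N (n + 1)) ∧
    (AlphaGood A α ([] : List M) → IsNoetherian A M) := by
  constructor
  · intro N hm ⟨σ, hσ, hspan⟩
    by_contra hc
    push_neg at hc
    exact alphaGood_key α σ hσ N hm hc hspan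
  · intro h
    rw [← monotone_stabilizes_iff_noetherian]
    intro f
    by_contra hc
    push_neg at hc
    choose g hg1 hg2 using hc
    set k : ℕ → ℕ := fun n => Nat.rec 0 (fun _ ih => g ih) n with hk
    refine alphaGood_key α [] h (fun n => f (k n))
      (f.monotone.comp (monotone_nat_of_le_succ fun n => hg1 _))
      (fun n h' => hg2 (k n) h') ?_
    simp
end
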